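/- arXiv:2402.08525 — 8 statements merged into one kernel-verified Lean document; each statement's English description precedes it below -/
import Mathlib

section
/- The Kempner-type series K = Σ_{n admissible, n>0} 1/n converges, i.e. the function n ↦ 1/n is summable over the set of positive admissible integers. -/
open MeasureTheory

def Admissible (b : ℕ) (A : Finset ℕ) (n : ℕ) : Prop :=
  (∀ d ∈ Nat.digits b n, d ∈ A) ∧ (n = 0 → 0 ∈ A)

instance (b : ℕ) (A : Finset ℕ) (n : ℕ) : Decidable (Admissible b A n) := by
  unfold Admissible
  infer_instance

noncomputable def kempnerMeasure (b : ℕ) (A : Finset ℕ) : Measure ℝ :=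
  if 0 ∈ A then
    Measure.sum fun l : ℕ =>
      ((b : ENNReal) ^ l)⁻¹ •
        Measure.sum fun n : {n : ℕ // Admissible b A n} =>
          Measure.dirac (((n : ℕ) : ℝ) / (b : ℝ) ^ l)
  else
    Measure.dirac 0 +
      Measure.sum fun l : ℕ =>
        ((b : ENNReal) ^ l)⁻¹ •
          Measure.sum
            (fun n : {n : ℕ // Admissible b A n ∧ l ≤ (Nat.digits b n).length} =>
              Measure.dirac (((n : ℕ) : ℝ) / (b : ℝ) ^ l))

noncomputable def moment (b : ℕ) (A : Finset ℕ) (m : ℕ) : ℝ :=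
  ∫ x in Set.Ico (0 : ℝ) 1, x ^ m ∂(kempnerMeasure b A)

noncomputable def kempnerSum (b : ℕ) (A : Finset ℕ) : ℝ :=
  ∑' n : {n : ℕ // 0 < n ∧ Admissible b A n}, (1 : ℝ) / ((n : ℕ) : ℝ)

theorem kempner_summable (b : ℕ) (hb : 1 < b) (A : Finset ℕ)
    (hA : A ⊂ Finset.range b) (hAne : A.Nonempty) (hA0 : A ≠ {0}) :
    Summable (fun n : {n : ℕ // 0 < n ∧ Admissible b A n} => (1 : ℝ) / ((n : ℕ) : ℝ)) := by
  have hb0 : (0:ℝ) < (b:ℝ) := by exact_mod_cast Nat.lt_of_lt_of_le Nat.zero_lt_one hb.le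
  have hNb : A.card < b := by
    have := Finset.card_lt_card hA
    simpa using this
  set T := {n : ℕ // 0 < n ∧ Admissible b A n}
  let e : T → Σ l : ℕ, (Fin l → A) :=
    fun n => ⟨(Nat.digits b n.1).length,
      fun i => ⟨(Nat.digits b n.1).get i, n.2.2.1 _ (List.get_mem _ i)⟩⟩
  have he : Function.Injective e := by
    intro m n h
    rw [Sigma.ext_iff] at h
    obtain ⟨h1, h2⟩ := h
    have h3 := (Fin.heq_fun_iff h1).mp h2
    have hd : Nat.digits b m.1 = Nat.digits b n.1 := by
      apply List.ext_get h1
      intro i hi1 hi2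
      have := congrArg Subtype.val (h3 ⟨i, hi1⟩)
      simpa [e] using this
    have : m.1 = n.1 := by
      have := congrArg (Nat.ofDigits b) hd
      rwa [Nat.ofDigits_digits, Nat.ofDigits_digits] at this
    exact Subtype.ext this
  have hh : Summable (fun p : Σ l : ℕ, (Fin l → A) => (b:ℝ) * ((b:ℝ)⁻¹)^p.1) := by
    apply (summable_sigma_of_nonneg ?_).mpr
    constructor
    · intro l; exact Summable.of_finite
    · have key : ∀ l : ℕ, (∑' _ : Fin l → (A:Finset ℕ), (b:ℝ) * ((b:ℝ)⁻¹)^l)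
          = (b:ℝ) * (((A.card:ℝ)/b))^l := by
        intro l
        rw [tsum_const, Nat.card_eq_fintype_card, Fintype.card_fun, Fintype.card_coe,
          Fintype.card_fin, nsmul_eq_mul, div_pow]
        push_cast
        field_simp
        rw [← mul_pow, one_div, inv_mul_cancel₀ hb0.ne', one_pow]
      simp only [key]
      apply Summable.mul_left
      apply summable_geometric_of_lt_one (by positivity)
      rw [div_lt_one hb0]
      exact_mod_cast hNb
    · intro p; positivity
  refine Summable.of_nonneg_of_le (fun n => by positivity) ?_ (hh.comp_injective he)
  intro n
  show (1:ℝ) / n.1 ≤ (b:ℝ) * ((b:ℝ)⁻¹) ^ (Nat.digits b n.1).length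
  have hle : (b:ℝ) ^ (Nat.digits b n.1).length ≤ b * n.1 := by
    exact_mod_cast Nat.base_pow_length_digits_le b n.1 hb n.2.1.ne'
  rw [div_le_iff₀ (by exact_mod_cast n.2.1), inv_pow, ← div_eq_mul_inv,
    div_mul_eq_mul_div, le_div_iff₀ (by positivity), one_mul]
  linarith
end

section
/- The contribution of the l-th block of the Kempner series is bounded: for every l ≥ 1, Σ_{n admissible, b^{l−1} ≤ n < b^l} 1/n ≤ N₁ · N^{l−1} · b^{−(l−1)}, where N₁ = #(A∖{0}). -/
open MeasureTheory

lemma kempner_count_bound (b : ℕ) (hb : 1 < b) (A : Finset ℕ) :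
    ∀ l, 1 ≤ l →
      ((Finset.range (b ^ l)).filter (fun n => Admissible b A n ∧ b ^ (l - 1) ≤ n)).card
        ≤ (A.erase 0).card * A.card ^ (l - 1) := by
  have hbpos : 0 < b := by omega
  intro l
  induction l with
  | zero => omega
  | succ k IH =>
    intro _
    match k, IH with
    | 0, _ =>
      simp only [pow_one, Nat.sub_self, pow_zero, mul_one]
      apply Finset.card_le_card_of_injOn id _ (Function.injective_id.injOn)
      intro n hn
      simp only [Finset.mem_coe, Finset.mem_filter, Finset.mem_range] at hn
      obtain ⟨hlt, hadm, hge⟩ := hn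
      have hn0 : 0 < n := lt_of_lt_of_le Nat.zero_lt_one (by simpa using hge)
      rw [pow_one] at hlt
      have hd : Nat.digits b n = n % b :: Nat.digits b (n / b) := Nat.digits_def' hb hn0
      rw [Nat.mod_eq_of_lt hlt, Nat.div_eq_of_lt hlt] at hd
      simp only [Nat.digits_zero] at hd
      have : n ∈ A := hadm.1 n (by rw [hd]; exact List.mem_singleton_self n)
      exact Finset.mem_erase.2 ⟨hn0.ne', this⟩
    | k + 1, IH =>
      have IH' := IH (by omega)
      simp only [Nat.add_sub_cancel] at IH' ⊢
      have key : ((Finset.range (b ^ (k + 2))).filter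
            (fun n => Admissible b A n ∧ b ^ (k + 1) ≤ n)).card
          ≤ (((Finset.range (b ^ (k + 1))).filter
            (fun n => Admissible b A n ∧ b ^ k ≤ n)) ×ˢ A).card := by
        apply Finset.card_le_card_of_injOn (fun n => (n / b, n % b))
        · intro n hn
          simp only [Finset.mem_coe, Finset.mem_filter, Finset.mem_range] at hn
          obtain ⟨hlt, hadm, hge⟩ := hn
          have hn0 : 0 < n := lt_of_lt_of_le (Nat.pow_pos hbpos) hge
          have hd : Nat.digits b n = n % b :: Nat.digits b (n / b) := Nat.digits_def' hb hn0
          have hmem : n % b ∈ A := hadm.1 _ (by rw [hd]; exact List.mem_cons_self)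
          have hdivlt : n / b < b ^ (k + 1) :=
            Nat.div_lt_of_lt_mul (by rw [mul_comm, ← pow_succ]; exact hlt)
          have hdivge : b ^ k ≤ n / b :=
            (Nat.le_div_iff_mul_le hbpos).2 (by rw [← pow_succ]; exact hge)
          have hdivpos : 0 < n / b := lt_of_lt_of_le (Nat.pow_pos hbpos) hdivge
          refine Finset.mem_product.2 ⟨Finset.mem_filter.2 ⟨Finset.mem_range.2 hdivlt,
            ⟨fun d hd' => hadm.1 d (by rw [hd]; exact List.mem_cons_of_mem _ hd'),
             fun h0 => absurd h0 hdivpos.ne'⟩, hdivge⟩, hmem⟩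
        · intro n _ m _ h
          simp only [Prod.mk.injEq] at h
          rw [← Nat.div_add_mod n b, ← Nat.div_add_mod m b, h.1, h.2]
      calc _ ≤ _ := key
        _ = _ := by rw [Finset.card_product]
        _ ≤ ((A.erase 0).card * A.card ^ k) * A.card :=
            Nat.mul_le_mul_right _ IH'
        _ = (A.erase 0).card * A.card ^ (k + 1) := by ring

theorem kempner_block_bound (b : ℕ) (hb : 1 < b) (A : Finset ℕ)
    (hA : A ⊂ Finset.range b) (hAne : A.Nonempty) (hA0 : A ≠ {0})
    (l : ℕ) (hl : 1 ≤ l) :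
    ∑ n ∈ (Finset.range (b ^ l)).filter (fun n => Admissible b A n ∧ b ^ (l - 1) ≤ n),
        (1 : ℝ) / (n : ℝ)
      ≤ ((A.erase 0).card : ℝ) * (A.card : ℝ) ^ (l - 1) * ((b : ℝ) ^ (l - 1))⁻¹ := by
  have hbpos : (0:ℝ) < (b:ℝ) ^ (l-1) := by positivity
  have hterm : ∀ n ∈ (Finset.range (b ^ l)).filter
      (fun n => Admissible b A n ∧ b ^ (l - 1) ≤ n),
      (1 : ℝ) / (n : ℝ) ≤ ((b : ℝ) ^ (l - 1))⁻¹ := by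
    intro n hn
    simp only [Finset.mem_filter] at hn
    have hge : (b:ℝ) ^ (l-1) ≤ (n:ℝ) := by
      have := hn.2.2
      calc (b:ℝ) ^ (l-1) = ((b ^ (l-1) : ℕ) : ℝ) := by push_cast; ring
        _ ≤ (n:ℝ) := Nat.cast_le.2 this
    rw [one_div]
    exact inv_anti₀ hbpos hge
  have hc := Finset.sum_le_card_nsmul _ _ _ hterm
  refine hc.trans ?_
  calc (((Finset.range (b ^ l)).filter
          (fun n => Admissible b A n ∧ b ^ (l - 1) ≤ n)).card : ℕ) • ((b : ℝ) ^ (l - 1))⁻¹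
      = (((Finset.range (b ^ l)).filter
          (fun n => Admissible b A n ∧ b ^ (l - 1) ≤ n)).card : ℝ) * ((b : ℝ) ^ (l - 1))⁻¹ := by
        rw [nsmul_eq_mul]
    _ ≤ (((A.erase 0).card * A.card ^ (l - 1) : ℕ) : ℝ) * ((b : ℝ) ^ (l - 1))⁻¹ := by
        apply mul_le_mul_of_nonneg_right _ (by positivity)
        exact_mod_cast kempner_count_bound b hb A l hl
    _ = ((A.erase 0).card : ℝ) * (A.card : ℝ) ^ (l - 1) * ((b : ℝ) ^ (l - 1))⁻¹ := by
        push_cast; ring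
end

section
/- The Kempner sum equals the integral of 1/x over the interval [1/b, 1) against μ: ∫_{[1/b,1)} x^{−1} dμ(x) = K. -/
open MeasureTheory

lemma pow_le_mul_iff (b n l : ℕ) (hb : 1 < b) (hn : n ≠ 0) :
    b ^ l ≤ n * b ↔ l ≤ Nat.log b n + 1 := by
  constructor
  · intro h
    by_contra hl
    push_neg at hl
    have h1 : n < b ^ (Nat.log b n + 1) := Nat.lt_pow_succ_log_self hb n
    have h2 : n * b < b ^ (Nat.log b n + 1) * b :=
      (Nat.mul_lt_mul_right (by omega : 0 < b)).mpr h1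
    have h3 : b ^ (Nat.log b n + 1) * b = b ^ (Nat.log b n + 2) := by ring
    have h4 : b ^ (Nat.log b n + 2) ≤ b ^ l := Nat.pow_le_pow_right (by omega) (by omega)
    omega
  · intro h
    calc b ^ l ≤ b ^ (Nat.log b n + 1) := Nat.pow_le_pow_right (by omega) h
    _ = b ^ (Nat.log b n) * b := by ring
    _ ≤ n * b := Nat.mul_le_mul_right _ (Nat.pow_log_le_self b hn)

lemma mem_Ico_iff_len (b n l : ℕ) (hb : 1 < b) (hn : n ≠ 0) :
    ((n : ℝ) / (b : ℝ) ^ l ∈ Set.Ico ((b : ℝ)⁻¹) 1) ↔ l = (Nat.digits b n).length := by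
  have hb0 : (0:ℝ) < b := by positivity
  have hbl : (0:ℝ) < (b:ℝ)^l := by positivity
  rw [Set.mem_Ico, div_lt_one hbl, Nat.digits_len b n hb hn]
  have h1 : (b:ℝ)⁻¹ ≤ (n:ℝ) / (b:ℝ)^l ↔ b ^ l ≤ n * b := by
    rw [inv_eq_one_div, div_le_div_iff₀ hb0 hbl, one_mul]
    exact_mod_cast Iff.rfl
  have h2 : (n:ℝ) < (b:ℝ)^l ↔ n < b ^ l := by exact_mod_cast Iff.rfl
  rw [h1, h2, pow_le_mul_iff b n l hb hn, (Nat.log_lt_iff_lt_pow hb hn).symm]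
  omega

/-- the summand -/
noncomputable def kE (b : ℕ) (A : Finset ℕ) (n l : ℕ) : ENNReal :=
  if Admissible b A n then
    ((b : ENNReal) ^ l)⁻¹ *
      (if ((n : ℝ) / (b : ℝ) ^ l) ∈ Set.Ico ((b : ℝ)⁻¹) 1 then
        ENNReal.ofReal (((n : ℝ) / (b : ℝ) ^ l)⁻¹) else 0)
  else 0

lemma kE_tsum (b : ℕ) (A : Finset ℕ) (hb : 1 < b) (n : ℕ) :
    ∑' l : ℕ, kE b A n l =
      if 0 < n ∧ Admissible b A n then ENNReal.ofReal ((n : ℝ)⁻¹) else 0 := by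
  by_cases hAd : Admissible b A n
  · rcases Nat.eq_zero_or_pos n with hn | hn
    · subst hn
      have hne : ¬ ((0 : ℝ) ∈ Set.Ico ((b : ℝ)⁻¹) 1) := by
        simp only [Set.mem_Ico, not_and, not_lt]
        intro h
        exfalso
        have : (0:ℝ) < (b:ℝ)⁻¹ := by positivity
        linarith
      simp only [kE, hAd, if_true, Nat.cast_zero, zero_div, hne, if_false, mul_zero,
        tsum_zero]
      simp
    · have hn' : n ≠ 0 := hn.ne'
      set L := (Nat.digits b n).length with hL
      rw [if_pos ⟨hn, hAd⟩]
      rw [tsum_eq_single L ?_]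
      · have hmem : ((n : ℝ) / (b : ℝ) ^ L ∈ Set.Ico ((b : ℝ)⁻¹) 1) :=
          (mem_Ico_iff_len b n L hb hn').mpr rfl
        simp only [kE, hAd, if_true, hmem]
        have hbl : (0:ℝ) < (b:ℝ)^L := by positivity
        have hinv : ((n : ℝ) / (b : ℝ) ^ L)⁻¹ = (b:ℝ)^L * (n:ℝ)⁻¹ := by
          field_simp
        rw [hinv, ENNReal.ofReal_mul (by positivity),
          show ENNReal.ofReal ((b:ℝ)^L) = ((b:ENNReal))^L by
            rw [ENNReal.ofReal_pow (by positivity), ENNReal.ofReal_natCast],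
          ← mul_assoc, ENNReal.inv_mul_cancel, one_mul]
        · exact pow_ne_zero _ (by exact_mod_cast (by omega : b ≠ 0))
        · exact ENNReal.pow_ne_top (ENNReal.natCast_ne_top b)
      · intro l hl
        have : ¬ ((n : ℝ) / (b : ℝ) ^ l ∈ Set.Ico ((b : ℝ)⁻¹) 1) := by
          rw [mem_Ico_iff_len b n l hb hn']
          exact hl
        simp [kE, hAd, this]
  · simp [kE, hAd]

theorem kempner_sum_as_integral (b : ℕ) (hb : 1 < b) (A : Finset ℕ)
    (hA : A ⊂ Finset.range b) (hAne : A.Nonempty) (hA0 : A ≠ {0}) :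
    ∫ x in Set.Ico ((b : ℝ)⁻¹) 1, x⁻¹ ∂(kempnerMeasure b A) = kempnerSum b A := by
  have hb0 : (0:ℝ) < b := by positivity
  set s : Set ℝ := Set.Ico ((b : ℝ)⁻¹) 1 with hs_def
  have hs : MeasurableSet s := measurableSet_Ico
  have hf : Measurable fun x : ℝ => ENNReal.ofReal x⁻¹ :=
    ENNReal.measurable_ofReal.comp measurable_inv
  -- step 1: Bochner integral = lintegral
  have h1 : (0 : ℝ → ℝ) ≤ᵐ[(kempnerMeasure b A).restrict s] fun x => x⁻¹ := by
    refine ae_restrict_of_forall_mem hs fun x hx => ?_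
    have : (0:ℝ) < (b:ℝ)⁻¹ := by positivity
    have hx0 : (0:ℝ) < x := lt_of_lt_of_le this hx.1
    positivity
  rw [integral_eq_lintegral_of_nonneg_ae h1 measurable_inv.aestronglyMeasurable]
  -- step 2: compute the lintegral
  have key : ∫⁻ x in s, ENNReal.ofReal x⁻¹ ∂(kempnerMeasure b A) =
      ∑' n : ℕ, if 0 < n ∧ Admissible b A n then ENNReal.ofReal ((n : ℝ)⁻¹) else 0 := by
    have diracs : ∀ a : ℝ, ∫⁻ x in s, ENNReal.ofReal x⁻¹ ∂(Measure.dirac a) =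
        (if a ∈ s then ENNReal.ofReal a⁻¹ else 0) := fun a => setLIntegral_dirac' hf hs
    rw [kempnerMeasure]
    split_ifs with h0
    · rw [Measure.restrict_sum _ hs, lintegral_sum_measure]
      calc (∑' l : ℕ, ∫⁻ x in s, ENNReal.ofReal x⁻¹
              ∂((((b : ENNReal) ^ l)⁻¹ • Measure.sum fun n : {n : ℕ // Admissible b A n} =>
                Measure.dirac (((n : ℕ) : ℝ) / (b : ℝ) ^ l))))
          = ∑' l : ℕ, ∑' n : ℕ, kE b A n l := by
            refine tsum_congr fun l => ?_
            rw [Measure.restrict_smul, lintegral_smul_measure, Measure.restrict_sum _ hs,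
              lintegral_sum_measure, smul_eq_mul, ← ENNReal.tsum_mul_left]
            have step : (∑' n : {n : ℕ // Admissible b A n},
                ((b : ENNReal) ^ l)⁻¹ *
                  (if ((n : ℕ) : ℝ) / (b : ℝ) ^ l ∈ s then
                    ENNReal.ofReal ((((n : ℕ) : ℝ) / (b : ℝ) ^ l)⁻¹) else 0)) =
                ∑' n : ℕ, kE b A n l := by
              refine Eq.trans (tsum_subtype {n : ℕ | Admissible b A n} fun n =>
                ((b : ENNReal) ^ l)⁻¹ *
                  (if ((n : ℕ) : ℝ) / (b : ℝ) ^ l ∈ s then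
                    ENNReal.ofReal ((((n : ℕ) : ℝ) / (b : ℝ) ^ l)⁻¹) else 0)) ?_
              refine tsum_congr fun n => ?_
              rw [Set.indicator_apply, kE]
              simp only [Set.mem_setOf_eq, hs_def]
            rw [← step]
            exact tsum_congr fun n => by rw [diracs]
        _ = ∑' n : ℕ, ∑' l : ℕ, kE b A n l := ENNReal.tsum_comm
        _ = _ := tsum_congr fun n => kE_tsum b A hb n
    · have hAd0 : ¬ Admissible b A 0 := fun h => h0 (h.2 rfl)
      rw [Measure.restrict_add, lintegral_add_measure]
      have hz : ∫⁻ x in s, ENNReal.ofReal x⁻¹ ∂(Measure.dirac (0:ℝ)) = 0 := by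
        rw [diracs]
        have : (0:ℝ) ∉ s := by
          simp only [hs_def, Set.mem_Ico, not_and, not_lt]
          intro h; exfalso
          have : (0:ℝ) < (b:ℝ)⁻¹ := by positivity
          linarith
        rw [if_neg this]
      rw [hz, zero_add, Measure.restrict_sum _ hs, lintegral_sum_measure]
      calc (∑' l : ℕ, ∫⁻ x in s, ENNReal.ofReal x⁻¹
              ∂((((b : ENNReal) ^ l)⁻¹ • Measure.sum
                (fun n : {n : ℕ // Admissible b A n ∧ l ≤ (Nat.digits b n).length} =>
                  Measure.dirac (((n : ℕ) : ℝ) / (b : ℝ) ^ l)))))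
          = ∑' l : ℕ, ∑' n : ℕ, kE b A n l := by
            refine tsum_congr fun l => ?_
            rw [Measure.restrict_smul, lintegral_smul_measure, Measure.restrict_sum _ hs,
              lintegral_sum_measure, smul_eq_mul, ← ENNReal.tsum_mul_left]
            have step : (∑' n : {n : ℕ // Admissible b A n ∧ l ≤ (Nat.digits b n).length},
                ((b : ENNReal) ^ l)⁻¹ *
                  (if ((n : ℕ) : ℝ) / (b : ℝ) ^ l ∈ s then
                    ENNReal.ofReal ((((n : ℕ) : ℝ) / (b : ℝ) ^ l)⁻¹) else 0)) =
                ∑' n : ℕ, kE b A n l := by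
              refine Eq.trans (tsum_subtype
                {n : ℕ | Admissible b A n ∧ l ≤ (Nat.digits b n).length} fun n =>
                ((b : ENNReal) ^ l)⁻¹ *
                  (if ((n : ℕ) : ℝ) / (b : ℝ) ^ l ∈ s then
                    ENNReal.ofReal ((((n : ℕ) : ℝ) / (b : ℝ) ^ l)⁻¹) else 0)) ?_
              refine tsum_congr fun n => ?_
              rw [Set.indicator_apply, kE]
              simp only [Set.mem_setOf_eq, hs_def]
              by_cases hAd : Admissible b A n
              · have hn0 : n ≠ 0 := fun h => hAd0 (h ▸ hAd)
                by_cases hl : l ≤ (Nat.digits b n).length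
                · rw [if_pos ⟨hAd, hl⟩, if_pos hAd]
                · rw [if_neg (fun h => hl h.2), if_pos hAd]
                  have : ¬ ((n : ℝ) / (b : ℝ) ^ l ∈ Set.Ico ((b : ℝ)⁻¹) 1) := by
                    rw [mem_Ico_iff_len b n l hb hn0]
                    intro h; exact hl (h.le)
                  rw [if_neg this, mul_zero]
              · rw [if_neg (fun h => hAd h.1), if_neg hAd]
            rw [← step]
            exact tsum_congr fun n => by rw [diracs]
        _ = ∑' n : ℕ, ∑' l : ℕ, kE b A n l := ENNReal.tsum_comm
        _ = _ := tsum_congr fun n => kE_tsum b A hb n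
  rw [key, ENNReal.tsum_toReal_eq (fun n => by split_ifs <;> simp)]
  have hK : kempnerSum b A = ∑' n : ℕ,
      Set.indicator {n : ℕ | 0 < n ∧ Admissible b A n} (fun n => 1 / (n : ℝ)) n := by
    unfold kempnerSum
    exact tsum_subtype {n : ℕ | 0 < n ∧ Admissible b A n} (fun n => 1 / (n : ℝ))
  rw [hK]
  refine tsum_congr fun n => ?_
  rw [Set.indicator_apply]
  simp only [Set.mem_setOf_eq]
  split_ifs with h
  · rw [ENNReal.toReal_ofReal (by positivity), one_div]
  · simp
end

section
/- For every positive integer n, the restriction of μ to the interval [n, n+1) is the zero measure if n is not admissible, and is the pushforward under translation by n of the restriction of μ to [0,1) if n is admissible. -/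
open MeasureTheory

section Aux
variable {b : ℕ} {A : Finset ℕ}

lemma adm_pos_iff (hb : 1 < b) {m : ℕ} (hm : 0 < m) :
    Admissible b A m ↔ m % b ∈ A ∧ ∀ d ∈ Nat.digits b (m / b), d ∈ A := by
  rw [Admissible, Nat.digits_def' hb hm]
  simp [hm.ne', List.forall_mem_cons]

lemma adm_iff_mod_div (hb : 1 < b) (h0 : 0 ∈ A) (r : ℕ) :
    Admissible b A r ↔ r % b ∈ A ∧ Admissible b A (r / b) := by
  rcases Nat.eq_zero_or_pos r with rfl | hr
  · simp [Admissible, h0]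
  · rw [adm_pos_iff hb hr]
    simp [Admissible, h0]

lemma digits_len_le_iff (hb : 1 < b) (m l : ℕ) :
    (Nat.digits b m).length ≤ l ↔ m < b ^ l := by
  rcases Nat.eq_zero_or_pos m with rfl | hm
  · simpa using Nat.pow_pos (n := l) (show 0 < b by omega)
  · rw [Nat.digits_len b m hb hm.ne', ← Nat.log_lt_iff_lt_pow hb hm.ne']
    omega

lemma adm_extract (hb : 1 < b) {n : ℕ} (hn : 0 < n) :
    ∀ (l r : ℕ), r < b ^ l → Admissible b A (n * b ^ l + r) → Admissible b A n := by
  intro l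
  induction l with
  | zero =>
    intro r hr h
    simp only [pow_zero, Nat.lt_one_iff] at hr
    subst hr
    simpa using h
  | succ l ih =>
    intro r hr h
    have hb0 : 0 < b := by omega
    have hm : 0 < n * b ^ (l + 1) + r := by positivity
    have e : n * b ^ (l + 1) + r = r + n * b ^ l * b := by ring
    have hdiv : (n * b ^ (l + 1) + r) / b = n * b ^ l + r / b := by
      rw [e, Nat.add_mul_div_right _ _ hb0]; ring
    have hrb : r / b < b ^ l := Nat.div_lt_of_lt_mul (by rwa [← pow_succ'])
    have h2 := (adm_pos_iff hb hm).mp h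
    refine ih (r / b) hrb ⟨?_, ?_⟩
    · rw [← hdiv]; exact h2.2
    · intro h0
      exact absurd h0 (by positivity : 0 < n * b ^ l + r / b).ne'

lemma adm_split (hb : 1 < b) (h0 : 0 ∈ A) {n : ℕ} (hn : 0 < n) :
    ∀ (l r : ℕ), r < b ^ l →
      (Admissible b A (n * b ^ l + r) ↔ Admissible b A n ∧ Admissible b A r) := by
  intro l
  induction l with
  | zero =>
    intro r hr
    simp only [pow_zero, Nat.lt_one_iff] at hr
    subst hr
    simp [Admissible, h0]
  | succ l ih =>
    intro r hr
    have hb0 : 0 < b := by omega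
    have hm : 0 < n * b ^ (l + 1) + r := by positivity
    have e : n * b ^ (l + 1) + r = r + n * b ^ l * b := by ring
    have hmod : (n * b ^ (l + 1) + r) % b = r % b := by rw [e, Nat.add_mul_mod_self_right]
    have hdiv : (n * b ^ (l + 1) + r) / b = n * b ^ l + r / b := by
      rw [e, Nat.add_mul_div_right _ _ hb0]; ring
    have hrb : r / b < b ^ l := Nat.div_lt_of_lt_mul (by rwa [← pow_succ'])
    have hp : 0 < n * b ^ l + r / b := by positivity
    have hdig : (∀ d ∈ Nat.digits b (n * b ^ l + r / b), d ∈ A)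
        ↔ Admissible b A (n * b ^ l + r / b) := by
      exact ⟨fun h => ⟨h, fun h' => absurd h' hp.ne'⟩, fun h => h.1⟩
    rw [adm_pos_iff hb hm, hmod, hdiv, hdig, ih _ hrb, adm_iff_mod_div hb h0 r]
    tauto

lemma adm_split' (hb : 1 < b) (h0 : 0 ∉ A) {n : ℕ} (hn : 0 < n) :
    ∀ (l r : ℕ), r < b ^ l →
      (Admissible b A (n * b ^ l + r) ↔
        Admissible b A n ∧
          ((l = 0 ∧ r = 0) ∨ (Admissible b A r ∧ (Nat.digits b r).length = l))) := by
  intro l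
  induction l with
  | zero =>
    intro r hr
    simp only [pow_zero, Nat.lt_one_iff] at hr
    subst hr
    simp
  | succ l ih =>
    intro r hr
    have hb0 : 0 < b := by omega
    have hm : 0 < n * b ^ (l + 1) + r := by positivity
    have e : n * b ^ (l + 1) + r = r + n * b ^ l * b := by ring
    have hmod : (n * b ^ (l + 1) + r) % b = r % b := by rw [e, Nat.add_mul_mod_self_right]
    have hdiv : (n * b ^ (l + 1) + r) / b = n * b ^ l + r / b := by
      rw [e, Nat.add_mul_div_right _ _ hb0]; ring
    have hrb : r / b < b ^ l := Nat.div_lt_of_lt_mul (by rwa [← pow_succ'])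
    have hp : 0 < n * b ^ l + r / b := by positivity
    have hdig : (∀ d ∈ Nat.digits b (n * b ^ l + r / b), d ∈ A)
        ↔ Admissible b A (n * b ^ l + r / b) := by
      exact ⟨fun h => ⟨h, fun h' => absurd h' hp.ne'⟩, fun h => h.1⟩
    rw [adm_pos_iff hb hm, hmod, hdiv, hdig, ih _ hrb]
    constructor
    · rintro ⟨hmem, hAn, hcase⟩
      refine ⟨hAn, Or.inr ?_⟩
      rcases hcase with ⟨hl, hrb0⟩ | ⟨hAr, hlen⟩
      · have hr0 : 0 < r := by
          rcases Nat.eq_zero_or_pos r with rfl | h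
          · simp at hmem; exact absurd hmem h0
          · exact h
        have hdr : Nat.digits b r = [r % b] := by
          rw [Nat.digits_def' hb hr0, hrb0, Nat.digits_zero]
        subst hl
        refine ⟨⟨?_, fun h => absurd h (by omega)⟩, ?_⟩
        · rw [hdr]; simpa using hmem
        · rw [hdr]; simp
      · have hrbpos : 0 < r / b := by
          rcases Nat.eq_zero_or_pos (r / b) with h | h
          · exact absurd (hAr.2 h) h0
          · exact h
        have hrpos : 0 < r := by
          have := Nat.div_le_self r b; omega
        refine ⟨⟨?_, fun h => absurd h (by omega)⟩, ?_⟩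
        · rw [Nat.digits_def' hb hrpos]
          intro d hd
          rcases List.mem_cons.mp hd with rfl | hd
          · exact hmem
          · exact hAr.1 d hd
        · rw [Nat.digits_def' hb hrpos]
          simp [hlen]
    · rintro ⟨hAn, hcase⟩
      rcases hcase with ⟨h, _⟩ | ⟨hAr, hlen⟩
      · omega
      · have hrpos : 0 < r := by
          rcases Nat.eq_zero_or_pos r with rfl | h
          · simp at hlen
          · exact h
        rw [Nat.digits_def' hb hrpos] at hlen
        simp only [List.length_cons, Nat.add_right_cancel_iff] at hlen
        have hmem : r % b ∈ A := by
          have := hAr.1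
          rw [Nat.digits_def' hb hrpos] at this
          exact this _ List.mem_cons_self
        refine ⟨hmem, hAn, ?_⟩
        rcases Nat.eq_zero_or_pos (r / b) with h | h
        · left; constructor
          · rw [h] at hlen; simpa using hlen.symm
          · exact h
        · right
          refine ⟨⟨?_, fun h => absurd h (by omega)⟩, hlen⟩
          intro d hd
          have := hAr.1
          rw [Nat.digits_def' hb hrpos] at this
          exact this _ (List.mem_cons_of_mem _ hd)

end Aux

section Meas
variable {b : ℕ} {A : Finset ℕ}

lemma mem_Ico_div_iff (hb : 1 < b) (l m n : ℕ) :
    ((m : ℝ) / (b : ℝ) ^ l ∈ Set.Ico (n : ℝ) ((n : ℝ) + 1)) ↔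
      n * b ^ l ≤ m ∧ m < (n + 1) * b ^ l := by
  have hb0 : (0:ℝ) < (b : ℝ) := Nat.cast_pos.mpr (by omega)
  have hbl : (0:ℝ) < (b : ℝ) ^ l := by positivity
  rw [Set.mem_Ico, le_div_iff₀ hbl, div_lt_iff₀ hbl]
  have e1 : (n : ℝ) * (b : ℝ) ^ l = ((n * b ^ l : ℕ) : ℝ) := by push_cast; ring
  have e2 : ((n : ℝ) + 1) * (b : ℝ) ^ l = (((n + 1) * b ^ l : ℕ) : ℝ) := by push_cast; ring
  rw [e1, e2, Nat.cast_le, Nat.cast_lt]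

lemma key_tsum (hb : 1 < b) {n : ℕ} (hn : 0 < n) (l : ℕ) (P Q : ℕ → Prop)
    (hPQ : ∀ r, r < b ^ l → (P (n * b ^ l + r) ↔ Q r)) (s : Set ℝ) :
    (∑' m : ℕ, {m : ℕ | P m}.indicator
        (fun m => (s ∩ Set.Ico (n : ℝ) ((n : ℝ) + 1)).indicator (1 : ℝ → ENNReal)
          ((m : ℝ) / (b : ℝ) ^ l)) m)
      = ∑' r : ℕ, {r : ℕ | Q r}.indicator
          (fun r => ((fun x => x + (n : ℝ)) ⁻¹' s ∩ Set.Ico (0 : ℝ) 1).indicator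
            (1 : ℝ → ENNReal) ((r : ℝ) / (b : ℝ) ^ l)) r := by
  classical
  have hb0 : (0:ℝ) < (b : ℝ) := Nat.cast_pos.mpr (by omega)
  have hbl : (0:ℝ) < (b : ℝ) ^ l := by positivity
  set F : ℕ → ENNReal := fun m => {m : ℕ | P m}.indicator
      (fun m => (s ∩ Set.Ico (n : ℝ) ((n : ℝ) + 1)).indicator (1 : ℝ → ENNReal)
        ((m : ℝ) / (b : ℝ) ^ l)) m with hF
  have hinj : Function.Injective (fun r : ℕ => n * b ^ l + r) := fun x y h => by
    simpa using h
  have hsupp : Function.support F ⊆ Set.range (fun r : ℕ => n * b ^ l + r) := by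
    intro m hm
    have h1 : ((m : ℝ) / (b : ℝ) ^ l) ∈ s ∩ Set.Ico (n : ℝ) ((n : ℝ) + 1) := by
      by_contra hc
      apply hm
      simp only [hF, Set.indicator_apply, Set.indicator_of_notMem hc]
      split <;> rfl
    have h2 := (mem_Ico_div_iff hb l m n).mp h1.2
    exact ⟨m - n * b ^ l, by simp only []; omega⟩
  rw [← hinj.tsum_eq hsupp]
  apply tsum_congr
  intro r
  simp only [hF, Set.indicator_apply, Set.mem_setOf_eq, Set.mem_inter_iff, Set.mem_Ico,
    Set.mem_preimage]
  have h1 : (0:ℝ) ≤ (r : ℝ) / (b : ℝ) ^ l := by positivity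
  have hpt : ((n * b ^ l + r : ℕ) : ℝ) / (b : ℝ) ^ l = (r : ℝ) / (b : ℝ) ^ l + (n : ℝ) := by
    field_simp; push_cast; ring
  have hpt' : ((n:ℝ) * (b:ℝ) ^ l + (r:ℝ)) / (b : ℝ) ^ l = (r : ℝ) / (b : ℝ) ^ l + (n : ℝ) := by
    field_simp; ring
  by_cases hr : r < b ^ l
  · have hlt : (r : ℝ) / (b : ℝ) ^ l < 1 := by
      rw [div_lt_one hbl]
      exact_mod_cast hr
    have hiff := hPQ r hr
    simp only [hpt, hiff]
    have m1 : ((n:ℝ) ≤ (r : ℝ) / (b : ℝ) ^ l + (n:ℝ)) := by linarith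
    have m2 : ((r : ℝ) / (b : ℝ) ^ l + (n:ℝ) < (n:ℝ) + 1) := by linarith
    simp [m1, m2, h1, hlt]
  · have hge : (1:ℝ) ≤ (r : ℝ) / (b : ℝ) ^ l := by
      rw [le_div_iff₀ hbl]
      have : (b:ℝ) ^ l ≤ (r:ℝ) := by exact_mod_cast Nat.le_of_not_lt hr
      linarith
    have m2 : ¬ ((r : ℝ) / (b : ℝ) ^ l + (n:ℝ) < (n:ℝ) + 1) := by
      rw [hpt] at *; push_neg; linarith
    have m3 : ¬ ((r : ℝ) / (b : ℝ) ^ l < 1) := by push_neg; linarith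
    simp only [hpt, hpt']
    simp [m2, m3]

end Meas

section Main
variable {b : ℕ} {A : Finset ℕ}

lemma eval1 (h0 : 0 ∈ A) {T : Set ℝ} (hT : MeasurableSet T) :
    kempnerMeasure b A T
      = ∑' l : ℕ, ((b : ENNReal) ^ l)⁻¹ *
          ∑' m : ℕ, {m : ℕ | Admissible b A m}.indicator
            (fun m => T.indicator (1 : ℝ → ENNReal) ((m : ℝ) / (b : ℝ) ^ l)) m := by
  unfold kempnerMeasure
  rw [if_pos h0, Measure.sum_apply _ hT]
  refine tsum_congr fun l => ?_
  rw [Measure.smul_apply, smul_eq_mul, Measure.sum_apply _ hT]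
  congr 1
  rw [← tsum_subtype {m : ℕ | Admissible b A m}
      (fun m => T.indicator (1 : ℝ → ENNReal) ((m : ℝ) / (b : ℝ) ^ l))]
  exact tsum_congr fun m => Measure.dirac_apply' _ hT

lemma eval2 (h0 : 0 ∉ A) {T : Set ℝ} (hT : MeasurableSet T) :
    kempnerMeasure b A T
      = T.indicator 1 0 + ∑' l : ℕ, ((b : ENNReal) ^ l)⁻¹ *
          ∑' m : ℕ, {m : ℕ | Admissible b A m ∧ l ≤ (Nat.digits b m).length}.indicator
            (fun m => T.indicator (1 : ℝ → ENNReal) ((m : ℝ) / (b : ℝ) ^ l)) m := by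
  unfold kempnerMeasure
  rw [if_neg h0, Measure.add_apply, Measure.dirac_apply' _ hT, Measure.sum_apply _ hT]
  congr 1
  refine tsum_congr fun l => ?_
  rw [Measure.smul_apply, smul_eq_mul, Measure.sum_apply _ hT]
  congr 1
  rw [← tsum_subtype {m : ℕ | Admissible b A m ∧ l ≤ (Nat.digits b m).length}
      (fun m => T.indicator (1 : ℝ → ENNReal) ((m : ℝ) / (b : ℝ) ^ l))]
  exact tsum_congr fun m => Measure.dirac_apply' _ hT

end Main

theorem kempner_measure_restrict (b : ℕ) (hb : 1 < b) (A : Finset ℕ)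
    (hA : A ⊂ Finset.range b) (hAne : A.Nonempty) (hA0 : A ≠ {0})
    (n : ℕ) (hn : 0 < n) :
    (¬ Admissible b A n →
        (kempnerMeasure b A).restrict (Set.Ico (n : ℝ) ((n : ℝ) + 1)) = 0)
    ∧ (Admissible b A n →
        (kempnerMeasure b A).restrict (Set.Ico (n : ℝ) ((n : ℝ) + 1))
          = Measure.map (fun x => x + (n : ℝ))
              ((kempnerMeasure b A).restrict (Set.Ico (0 : ℝ) 1))) := by
  have hb0 : (0:ℝ) < (b : ℝ) := Nat.cast_pos.mpr (by omega)
  constructor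
  · -- non-admissible case
    intro hAdm
    ext s hs
    rw [Measure.restrict_apply hs]
    simp only [Measure.coe_zero, Pi.zero_apply]
    have hT : MeasurableSet (s ∩ Set.Ico (n:ℝ) ((n:ℝ)+1)) := hs.inter measurableSet_Ico
    have hz : ∀ (l m : ℕ), Admissible b A m →
        (s ∩ Set.Ico (n:ℝ) ((n:ℝ)+1)).indicator (1 : ℝ → ENNReal) ((m:ℝ)/(b:ℝ)^l) = 0 := by
      intro l m hm
      apply Set.indicator_of_notMem
      rintro ⟨-, hmem⟩
      have h2 := (mem_Ico_div_iff hb l m n).mp hmem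
      have hexp : (n + 1) * b ^ l = n * b ^ l + b ^ l := by ring
      refine hAdm (adm_extract hb hn l (m - n * b ^ l) (by omega) ?_)
      have em : n * b ^ l + (m - n * b ^ l) = m := by omega
      rw [em]; exact hm
    by_cases h0 : 0 ∈ A
    · rw [eval1 h0 hT]
      refine ENNReal.tsum_eq_zero.mpr fun l => ?_
      have hzero : (∑' m : ℕ, {m : ℕ | Admissible b A m}.indicator
          (fun m => (s ∩ Set.Ico (n:ℝ) ((n:ℝ)+1)).indicator (1 : ℝ → ENNReal)
            ((m : ℝ) / (b : ℝ) ^ l)) m) = 0 := by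
        refine ENNReal.tsum_eq_zero.mpr fun m => ?_
        by_cases hm : Admissible b A m
        · rw [Set.indicator_of_mem (show m ∈ {m : ℕ | Admissible b A m} from hm)]
          exact hz l m hm
        · exact Set.indicator_of_notMem
            (show m ∉ {m : ℕ | Admissible b A m} from hm) _
      rw [hzero, mul_zero]
    · rw [eval2 h0 hT]
      have hd1 : (s ∩ Set.Ico (n:ℝ) ((n:ℝ)+1)).indicator (1 : ℝ → ENNReal) 0 = 0 := by
        apply Set.indicator_of_notMem
        rintro ⟨-, hmem, -⟩
        have : (0:ℝ) < (n:ℝ) := by exact_mod_cast hn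
        linarith
      rw [hd1, zero_add]
      refine ENNReal.tsum_eq_zero.mpr fun l => ?_
      have hzero : (∑' m : ℕ, {m : ℕ | Admissible b A m ∧ l ≤ (Nat.digits b m).length}.indicator
          (fun m => (s ∩ Set.Ico (n:ℝ) ((n:ℝ)+1)).indicator (1 : ℝ → ENNReal)
            ((m : ℝ) / (b : ℝ) ^ l)) m) = 0 := by
        refine ENNReal.tsum_eq_zero.mpr fun m => ?_
        by_cases hm : Admissible b A m ∧ l ≤ (Nat.digits b m).length
        · rw [Set.indicator_of_mem
            (show m ∈ {m : ℕ | Admissible b A m ∧ l ≤ (Nat.digits b m).length} from hm)]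
          exact hz l m hm.1
        · exact Set.indicator_of_notMem
            (show m ∉ {m : ℕ | Admissible b A m ∧ l ≤ (Nat.digits b m).length} from hm) _
      rw [hzero, mul_zero]
  · -- admissible case
    intro hAdm
    ext s hs
    have hmeas : Measurable fun x : ℝ => x + (n : ℝ) := measurable_add_const _
    rw [Measure.restrict_apply hs, Measure.map_apply hmeas hs,
      Measure.restrict_apply (hs.preimage hmeas)]
    have hT1 : MeasurableSet (s ∩ Set.Ico (n:ℝ) ((n:ℝ)+1)) := hs.inter measurableSet_Ico
    have hT2 : MeasurableSet ((fun x => x + (n:ℝ)) ⁻¹' s ∩ Set.Ico (0:ℝ) 1) :=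
      (hs.preimage hmeas).inter measurableSet_Ico
    by_cases h0 : 0 ∈ A
    · rw [eval1 h0 hT1, eval1 h0 hT2]
      refine tsum_congr fun l => ?_
      congr 1
      exact key_tsum hb hn l _ _
        (fun r hr => (adm_split hb h0 hn l r hr).trans (and_iff_right hAdm)) s
    · rw [eval2 h0 hT1, eval2 h0 hT2]
      have hd1 : (s ∩ Set.Ico (n:ℝ) ((n:ℝ)+1)).indicator (1 : ℝ → ENNReal) 0 = 0 := by
        apply Set.indicator_of_notMem
        rintro ⟨-, hmem, -⟩
        have : (0:ℝ) < (n:ℝ) := by exact_mod_cast hn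
        linarith
      have hd2 : ((fun x => x + (n:ℝ)) ⁻¹' s ∩ Set.Ico (0:ℝ) 1).indicator (1 : ℝ → ENNReal) 0
          = s.indicator 1 (n:ℝ) := by
        by_cases hsn : (n:ℝ) ∈ s
        · have h0mem : (0:ℝ) ∈ (fun x => x + (n:ℝ)) ⁻¹' s ∩ Set.Ico (0:ℝ) 1 :=
            ⟨by simpa using hsn, Set.mem_Ico.mpr ⟨le_refl 0, one_pos⟩⟩
          rw [Set.indicator_of_mem h0mem, Set.indicator_of_mem hsn]
          rfl
        · have h0mem : (0:ℝ) ∉ (fun x => x + (n:ℝ)) ⁻¹' s ∩ Set.Ico (0:ℝ) 1 := by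
            rintro ⟨hp, -⟩
            exact hsn (by simpa using hp)
          rw [Set.indicator_of_notMem h0mem, Set.indicator_of_notMem hsn]
      have hL0 : (∑' m : ℕ, {m : ℕ | Admissible b A m ∧ 0 ≤ (Nat.digits b m).length}.indicator
          (fun m => (s ∩ Set.Ico (n:ℝ) ((n:ℝ)+1)).indicator (1 : ℝ → ENNReal)
            ((m : ℝ) / (b : ℝ) ^ 0)) m) = s.indicator 1 (n:ℝ) := by
        rw [tsum_eq_single n ?_]
        · have hmemset : n ∈ {m : ℕ | Admissible b A m ∧ 0 ≤ (Nat.digits b m).length} :=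
            ⟨hAdm, Nat.zero_le _⟩
          rw [Set.indicator_of_mem hmemset]
          have hdiv : ((n:ℝ)/(b:ℝ)^0) = (n:ℝ) := by simp
          rw [hdiv]
          have hn' : (n:ℝ) ∈ Set.Ico (n:ℝ) ((n:ℝ)+1) := ⟨le_refl _, by linarith⟩
          by_cases hsn : (n:ℝ) ∈ s
          · rw [Set.indicator_of_mem
              (show (n:ℝ) ∈ s ∩ Set.Ico (n:ℝ) ((n:ℝ)+1) from ⟨hsn, hn'⟩),
              Set.indicator_of_mem hsn]
          · rw [Set.indicator_of_notMem
              (show (n:ℝ) ∉ s ∩ Set.Ico (n:ℝ) ((n:ℝ)+1) from fun h => hsn h.1),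
              Set.indicator_of_notMem hsn]
        · intro m hm
          apply Set.indicator_apply_eq_zero.mpr
          intro _
          apply Set.indicator_of_notMem
          rintro ⟨-, hmem⟩
          have h2 := (mem_Ico_div_iff hb 0 m n).mp hmem
          simp only [pow_zero, mul_one] at h2
          omega
      have hR0 : (∑' m : ℕ,
          {m : ℕ | Admissible b A m ∧ 0 ≤ (Nat.digits b m).length}.indicator
          (fun m => ((fun x => x + (n:ℝ)) ⁻¹' s ∩ Set.Ico (0:ℝ) 1).indicator (1 : ℝ → ENNReal)
            ((m : ℝ) / (b : ℝ) ^ 0)) m) = 0 := by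
        refine ENNReal.tsum_eq_zero.mpr fun m => ?_
        rcases Nat.eq_zero_or_pos m with rfl | hm
        · apply Set.indicator_of_notMem
          rintro ⟨hadm, -⟩
          exact h0 (hadm.2 rfl)
        · apply Set.indicator_apply_eq_zero.mpr
          intro _
          apply Set.indicator_of_notMem
          rintro ⟨-, -, hmem⟩
          rw [pow_zero, div_one] at hmem
          have : (1:ℝ) ≤ (m:ℝ) := by exact_mod_cast hm
          linarith
      have hsucc : ∀ l : ℕ,
          (∑' m : ℕ, {m : ℕ | Admissible b A m ∧ l + 1 ≤ (Nat.digits b m).length}.indicator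
            (fun m => (s ∩ Set.Ico (n:ℝ) ((n:ℝ)+1)).indicator (1 : ℝ → ENNReal)
              ((m : ℝ) / (b : ℝ) ^ (l+1))) m)
          = ∑' m : ℕ, {m : ℕ | Admissible b A m ∧ l + 1 ≤ (Nat.digits b m).length}.indicator
            (fun m => ((fun x => x + (n:ℝ)) ⁻¹' s ∩ Set.Ico (0:ℝ) 1).indicator (1 : ℝ → ENNReal)
              ((m : ℝ) / (b : ℝ) ^ (l+1))) m := by
        intro l
        refine key_tsum hb hn (l+1) _ _ (fun r hr => ?_) s
        have hsplit := adm_split' hb h0 hn (l+1) r hr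
        constructor
        · rintro ⟨hm, -⟩
          rcases (hsplit.mp hm).2 with ⟨h, -⟩ | ⟨hAr, hlen⟩
          · omega
          · exact ⟨hAr, by omega⟩
        · rintro ⟨hAr, hlen⟩
          have hlen' : (Nat.digits b r).length = l + 1 := by
            have := (digits_len_le_iff hb r (l+1)).mpr hr
            omega
          refine ⟨hsplit.mpr ⟨hAdm, Or.inr ⟨hAr, hlen'⟩⟩, ?_⟩
          by_contra hc
          push_neg at hc
          have hle : (Nat.digits b (n * b ^ (l+1) + r)).length ≤ l := by omega
          rw [digits_len_le_iff hb] at hle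
          have hble : b ^ l ≤ b ^ (l+1) := Nat.pow_le_pow_right (by omega) (by omega)
          have hnb : b ^ (l+1) ≤ n * b ^ (l+1) := Nat.le_mul_of_pos_left _ hn
          omega
      have expandL :
          (∑' l : ℕ, ((b : ENNReal) ^ l)⁻¹ *
            ∑' m : ℕ, {m : ℕ | Admissible b A m ∧ l ≤ (Nat.digits b m).length}.indicator
              (fun m => (s ∩ Set.Ico (n:ℝ) ((n:ℝ)+1)).indicator (1 : ℝ → ENNReal)
                ((m : ℝ) / (b : ℝ) ^ l)) m)
          = ((b : ENNReal) ^ 0)⁻¹ *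
              (∑' m : ℕ, {m : ℕ | Admissible b A m ∧ 0 ≤ (Nat.digits b m).length}.indicator
                (fun m => (s ∩ Set.Ico (n:ℝ) ((n:ℝ)+1)).indicator (1 : ℝ → ENNReal)
                  ((m : ℝ) / (b : ℝ) ^ 0)) m)
            + ∑' l : ℕ, ((b : ENNReal) ^ (l+1))⁻¹ *
                ∑' m : ℕ, {m : ℕ | Admissible b A m ∧ l + 1 ≤ (Nat.digits b m).length}.indicator
                  (fun m => (s ∩ Set.Ico (n:ℝ) ((n:ℝ)+1)).indicator (1 : ℝ → ENNReal)
                    ((m : ℝ) / (b : ℝ) ^ (l+1))) m :=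
        tsum_eq_zero_add' ENNReal.summable
      have expandR :
          (∑' l : ℕ, ((b : ENNReal) ^ l)⁻¹ *
            ∑' m : ℕ, {m : ℕ | Admissible b A m ∧ l ≤ (Nat.digits b m).length}.indicator
              (fun m => ((fun x => x + (n:ℝ)) ⁻¹' s ∩ Set.Ico (0:ℝ) 1).indicator
                (1 : ℝ → ENNReal) ((m : ℝ) / (b : ℝ) ^ l)) m)
          = ((b : ENNReal) ^ 0)⁻¹ *
              (∑' m : ℕ, {m : ℕ | Admissible b A m ∧ 0 ≤ (Nat.digits b m).length}.indicator
                (fun m => ((fun x => x + (n:ℝ)) ⁻¹' s ∩ Set.Ico (0:ℝ) 1).indicator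
                  (1 : ℝ → ENNReal) ((m : ℝ) / (b : ℝ) ^ 0)) m)
            + ∑' l : ℕ, ((b : ENNReal) ^ (l+1))⁻¹ *
                ∑' m : ℕ, {m : ℕ | Admissible b A m ∧ l + 1 ≤ (Nat.digits b m).length}.indicator
                  (fun m => ((fun x => x + (n:ℝ)) ⁻¹' s ∩ Set.Ico (0:ℝ) 1).indicator
                    (1 : ℝ → ENNReal) ((m : ℝ) / (b : ℝ) ^ (l+1))) m :=
        tsum_eq_zero_add' ENNReal.summable
      rw [hd1, hd2, zero_add, expandL, expandR, hL0, hR0, mul_zero, zero_add]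
      simp only [pow_zero, inv_one, one_mul]
      congr 1
      exact tsum_congr fun l => by rw [hsucc l]
end

section
/- For every l ≥ 1 the Kempner sum satisfies K = Σ_{n admissible, 0<n<b^{l−1}} 1/n + Σ_{n admissible, l(n)=l} ∫_{[0,1)} 1/(n+x) dμ(x). -/
open MeasureTheory

private lemma len_le_iff {b : ℕ} (hb : 1 < b) {r L : ℕ} :
    (Nat.digits b r).length ≤ L ↔ r < b ^ L := by
  rcases Nat.eq_zero_or_pos r with rfl | hr
  · simp [Nat.pow_pos, Nat.one_le_iff_ne_zero, pow_pos (Nat.lt_of_lt_of_le Nat.zero_lt_one hb.le)]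
  · rw [Nat.digits_len b r hb hr.ne', Nat.succ_le_iff]
    exact Nat.log_lt_iff_lt_pow hb hr.ne'

private lemma digits_decomp {b : ℕ} (hb : 1 < b) {n L r : ℕ} (hn : 0 < n) (hr : r < b ^ L) :
    Nat.digits b (n * b ^ L + r) =
      Nat.digits b r ++ List.replicate (L - (Nat.digits b r).length) 0 ++ Nat.digits b n := by
  have hlen : (Nat.digits b r).length ≤ L := (len_le_iff hb).2 hr
  have h := Nat.digits_append_zeroes_append_digits (b := b) (k := L - (Nat.digits b r).length)
    (m := n) (n := r) hb hn
  rw [h, Nat.add_sub_cancel' hlen]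
  ring_nf

private lemma len_decomp {b : ℕ} (hb : 1 < b) {n L r : ℕ} (hn : 0 < n) (hr : r < b ^ L) :
    (Nat.digits b (n * b ^ L + r)).length = L + (Nat.digits b n).length := by
  have hlen : (Nat.digits b r).length ≤ L := (len_le_iff hb).2 hr
  rw [digits_decomp hb hn hr]
  simp only [List.length_append, List.length_replicate]
  omega


private lemma card_level_le {b : ℕ} (hb : 1 < b) (A : Finset ℕ) (k : ℕ) :
    ((Finset.range (b ^ k)).filter
        (fun m => (∀ d ∈ Nat.digits b m, d ∈ A) ∧ (Nat.digits b m).length = k)).card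
      ≤ A.card ^ k := by
  classical
  have h := Finset.card_le_card_of_injOn
    (f := fun m (i : Fin k) => (Nat.digits b m).getD i 0)
    (s := (Finset.range (b ^ k)).filter
        (fun m => (∀ d ∈ Nat.digits b m, d ∈ A) ∧ (Nat.digits b m).length = k))
    (t := Fintype.piFinset (fun _ : Fin k => A)) ?_ ?_
  · calc _ ≤ _ := h
      _ = A.card ^ k := by simp [Fintype.card_piFinset]
  · intro m hm
    simp only [Finset.coe_filter, Set.mem_setOf_eq, Finset.mem_range] at hm
    rw [Finset.mem_coe, Fintype.mem_piFinset]
    intro i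
    have hi : (i : ℕ) < (Nat.digits b m).length := by rw [hm.2.2]; exact i.isLt
    show (Nat.digits b m).getD (i : ℕ) 0 ∈ A
    rw [List.getD_eq_getElem _ _ hi]
    exact hm.2.1 _ (List.getElem_mem _)
  · intro m₁ h₁ m₂ h₂ hfeq
    simp only [Finset.coe_filter, Set.mem_setOf_eq, Finset.mem_range] at h₁ h₂
    rw [← Nat.digits_inj_iff (b := b)]
    apply List.ext_getElem (by rw [h₁.2.2, h₂.2.2])
    intro i hi₁ hi₂
    have := congrFun hfeq ⟨i, by rw [← h₁.2.2]; exact hi₁⟩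
    simp only at this
    rwa [List.getD_eq_getElem _ _ hi₁, List.getD_eq_getElem _ _ hi₂] at this

private lemma total_ne_top {b : ℕ} (hb : 1 < b) {A : Finset ℕ} (hA : A ⊂ Finset.range b) :
    (∑' m : ℕ, if 0 < m ∧ Admissible b A m then ((m : ENNReal))⁻¹ else 0) ≠ ⊤ := by
  classical
  have hb0 : (0:ℕ) < b := Nat.lt_of_lt_of_le Nat.zero_lt_one hb.le
  have hN : A.card < b := by
    have := Finset.card_lt_card hA
    simpa using this
  -- reorganize by length
  have hswap : (∑' m : ℕ, if 0 < m ∧ Admissible b A m then ((m : ENNReal))⁻¹ else 0)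
      = ∑' k : ℕ, ∑' m : ℕ,
          if 0 < m ∧ Admissible b A m ∧ (Nat.digits b m).length = k then ((m : ENNReal))⁻¹ else 0 := by
    rw [ENNReal.tsum_comm]
    refine tsum_congr fun m => ?_
    rw [tsum_eq_single ((Nat.digits b m).length)
      (fun k hk => if_neg (by rintro ⟨-, -, h⟩; exact hk h.symm))]
    by_cases h : 0 < m ∧ Admissible b A m
    · rw [if_pos h, if_pos ⟨h.1, h.2, rfl⟩]
    · rw [if_neg h, if_neg (by rintro ⟨h1, h2, -⟩; exact h ⟨h1, h2⟩)]
  rw [hswap]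
  -- bound each level
  have hlevel : ∀ k : ℕ, (∑' m : ℕ,
      if 0 < m ∧ Admissible b A m ∧ (Nat.digits b m).length = k then ((m : ENNReal))⁻¹ else 0)
      ≤ (A.card : ENNReal) ^ k * ((b : ENNReal) ^ (k - 1))⁻¹ := by
    intro k
    set s := (Finset.range (b ^ k)).filter
        (fun m => (∀ d ∈ Nat.digits b m, d ∈ A) ∧ (Nat.digits b m).length = k) with hs
    set g : ℕ → ENNReal := fun m =>
      if 0 < m ∧ Admissible b A m ∧ (Nat.digits b m).length = k then ((m : ENNReal))⁻¹ else 0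
      with hg
    have hsum : (∑' m : ℕ, g m) = ∑ m ∈ s, g m := by
      refine tsum_eq_sum fun m hm => ?_
      rw [hg]; beta_reduce; rw [if_neg]
      rintro ⟨hm0, ⟨hdig, -⟩, hlen⟩
      exact hm (Finset.mem_filter.mpr ⟨Finset.mem_range.mpr
        (hlen ▸ Nat.lt_base_pow_length_digits hb), hdig, hlen⟩)
    have hbound : ∀ m ∈ s, g m ≤ ((b : ENNReal) ^ (k - 1))⁻¹ := by
      intro m _
      rw [hg]; beta_reduce
      split_ifs with hc
      · obtain ⟨hm0, -, hlen⟩ := hc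
        have hk : 0 < k := by
          rcases Nat.eq_zero_or_pos k with rfl | hk
          · exfalso
            have : Nat.digits b m = [] := List.length_eq_zero_iff.mp hlen
            rw [Nat.digits_eq_nil_iff_eq_zero] at this
            omega
          · exact hk
        have h1 : b ^ (Nat.digits b m).length ≤ b * m :=
          Nat.base_pow_length_digits_le b m hb hm0.ne'
        have h2 : b ^ (k - 1) ≤ m := by
          rw [hlen] at h1
          have : b ^ (k - 1) * b ≤ m * b := by
            calc b ^ (k - 1) * b = b ^ k := by rw [← pow_succ]; congr 1; omega
              _ ≤ b * m := h1
              _ = m * b := mul_comm _ _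
          exact Nat.le_of_mul_le_mul_right this hb0
        refine ENNReal.inv_le_inv.mpr ?_
        exact_mod_cast Nat.cast_le.mpr h2
      · exact zero_le
    calc (∑' m : ℕ, g m) = ∑ m ∈ s, g m := hsum
      _ ≤ s.card • ((b : ENNReal) ^ (k - 1))⁻¹ := Finset.sum_le_card_nsmul _ _ _ hbound
      _ = (s.card : ENNReal) * ((b : ENNReal) ^ (k - 1))⁻¹ := by rw [nsmul_eq_mul]
      _ ≤ (A.card : ENNReal) ^ k * ((b : ENNReal) ^ (k - 1))⁻¹ := by
          gcongr
          exact_mod_cast card_level_le hb A k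
  -- geometric bound
  have hgeom : ∀ k : ℕ, (A.card : ENNReal) ^ k * ((b : ENNReal) ^ (k - 1))⁻¹
      ≤ (b : ENNReal) * ((A.card : ENNReal) * ((b : ENNReal))⁻¹) ^ k := by
    intro k
    have hbne : (b : ENNReal) ≠ 0 := by exact_mod_cast hb0.ne'
    have hbnetop : (b : ENNReal) ≠ ⊤ := ENNReal.natCast_ne_top b
    rcases Nat.eq_zero_or_pos k with rfl | hk
    · simpa using (show (1 : ENNReal) ≤ (b : ENNReal) by exact_mod_cast hb.le)
    · obtain ⟨j, rfl⟩ : ∃ j, k = j + 1 := ⟨k - 1, by omega⟩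
      apply le_of_eq
      rw [mul_pow, Nat.add_sub_cancel, ENNReal.inv_pow, pow_succ ((b : ENNReal))⁻¹ j]
      rw [show (b : ENNReal) * ((A.card : ENNReal) ^ (j+1) * (((b : ENNReal))⁻¹ ^ j * ((b : ENNReal))⁻¹))
        = (A.card : ENNReal) ^ (j+1) * ((b : ENNReal))⁻¹ ^ j * ((b : ENNReal) * ((b : ENNReal))⁻¹) from by
          ring, ENNReal.mul_inv_cancel hbne hbnetop, mul_one]
  have hr1 : (A.card : ENNReal) * ((b : ENNReal))⁻¹ < 1 := by
    have hbne : (b : ENNReal) ≠ 0 := by exact_mod_cast hb0.ne'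
    have hbnetop : (b : ENNReal) ≠ ⊤ := ENNReal.natCast_ne_top b
    have : (A.card : ENNReal) * ((b : ENNReal))⁻¹ < (b : ENNReal) * ((b : ENNReal))⁻¹ := by
      rw [ENNReal.mul_lt_mul_iff_left (ENNReal.inv_ne_zero.mpr hbnetop) (ENNReal.inv_ne_top.mpr hbne)]
      exact_mod_cast hN
    rwa [ENNReal.mul_inv_cancel hbne hbnetop] at this
  refine ne_top_of_le_ne_top ?_ ((ENNReal.tsum_le_tsum fun k => (hlevel k).trans (hgeom k)))
  rw [ENNReal.tsum_mul_left, ENNReal.tsum_geometric]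
  refine ENNReal.mul_ne_top (ENNReal.natCast_ne_top b) (ENNReal.inv_ne_top.mpr ?_)
  simpa [pos_iff_ne_zero] using tsub_pos_of_lt hr1


private lemma mem_Ico_iff {b : ℕ} (hb : 1 < b) (L r : ℕ) :
    ((r : ℝ) / (b : ℝ) ^ L ∈ Set.Ico (0 : ℝ) 1) ↔ r < b ^ L := by
  have hB : (0 : ℝ) < (b : ℝ) ^ L := by positivity
  rw [Set.mem_Ico]
  constructor
  · rintro ⟨-, h⟩
    rw [div_lt_one hB] at h
    exact_mod_cast h
  · intro h
    refine ⟨by positivity, ?_⟩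
    rw [div_lt_one hB]
    exact_mod_cast h

private lemma lint_eq (b : ℕ) (hb : 1 < b) (A : Finset ℕ) (f : ℝ → ENNReal)
    (hf : Measurable f) :
    ∫⁻ x in Set.Ico (0 : ℝ) 1, f x ∂(kempnerMeasure b A)
      = ∑' L : ℕ, ∑' r : ℕ,
          if (∀ d ∈ Nat.digits b r, d ∈ A) ∧ r < b ^ L ∧ (0 ∈ A ∨ (Nat.digits b r).length = L)
          then ((b : ENNReal) ^ L)⁻¹ * f ((r : ℝ) / (b : ℝ) ^ L) else 0 := by
  classical
  have hdirac : ∀ (a : ℝ), ∫⁻ x, f x ∂((Measure.dirac a).restrict (Set.Ico (0 : ℝ) 1))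
      = if a ∈ Set.Ico (0 : ℝ) 1 then f a else 0 := by
    intro a
    rw [restrict_dirac' measurableSet_Ico]
    split_ifs
    · exact lintegral_dirac' a hf
    · exact lintegral_zero_measure _
  rw [kempnerMeasure]
  by_cases h0 : 0 ∈ A
  · rw [if_pos h0, Measure.restrict_sum _ measurableSet_Ico, lintegral_sum_measure]
    refine tsum_congr fun L => ?_
    rw [Measure.restrict_smul, lintegral_smul_measure,
      Measure.restrict_sum _ measurableSet_Ico, lintegral_sum_measure]
    have step1 : (∑' (r : {n : ℕ // Admissible b A n}),
          ∫⁻ x, f x ∂((Measure.dirac (((r : ℕ) : ℝ) / (b : ℝ) ^ L)).restrict (Set.Ico (0:ℝ) 1)))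
        = ∑' (r : ℕ), Set.indicator {n : ℕ | Admissible b A n}
            (fun r => if ((r : ℝ) / (b : ℝ) ^ L ∈ Set.Ico (0:ℝ) 1)
              then f ((r : ℝ) / (b : ℝ) ^ L) else 0) r := by
      rw [← tsum_subtype]
      exact tsum_congr fun r => hdirac _
    rw [step1, smul_eq_mul, ← ENNReal.tsum_mul_left]
    refine tsum_congr fun r => ?_
    rw [Set.indicator_apply]
    by_cases hadm : r ∈ {n : ℕ | Admissible b A n}
    · rw [if_pos hadm]
      by_cases hico : (r : ℝ) / (b : ℝ) ^ L ∈ Set.Ico (0:ℝ) 1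
      · rw [if_pos hico, if_pos ⟨hadm.1, (mem_Ico_iff hb L r).1 hico, Or.inl h0⟩]
      · rw [if_neg hico, if_neg (fun hc => hico ((mem_Ico_iff hb L r).2 hc.2.1)), mul_zero]
    · rw [if_neg hadm, if_neg (fun hc => hadm ⟨hc.1, fun _ => h0⟩), mul_zero]
  · rw [if_neg h0, Measure.restrict_add, lintegral_add_measure]
    have hd0 : ∫⁻ x, f x ∂((Measure.dirac (0:ℝ)).restrict (Set.Ico (0:ℝ) 1)) = f 0 := by
      rw [hdirac 0, if_pos (by constructor <;> norm_num)]
    rw [hd0, Measure.restrict_sum _ measurableSet_Ico, lintegral_sum_measure]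
    have step1 : (∑' L : ℕ, ∫⁻ x, f x ∂((((b : ENNReal) ^ L)⁻¹ •
          Measure.sum (fun n : {n : ℕ // Admissible b A n ∧ L ≤ (Nat.digits b n).length} =>
            Measure.dirac (((n : ℕ) : ℝ) / (b : ℝ) ^ L))).restrict (Set.Ico (0:ℝ) 1)))
        = ∑' L : ℕ, ∑' r : ℕ,
            (if (Admissible b A r ∧ L ≤ (Nat.digits b r).length) ∧ r < b ^ L
             then ((b : ENNReal) ^ L)⁻¹ * f ((r : ℝ) / (b : ℝ) ^ L) else 0) := by
      refine tsum_congr fun L => ?_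
      rw [Measure.restrict_smul, lintegral_smul_measure,
        Measure.restrict_sum _ measurableSet_Ico, lintegral_sum_measure]
      have step2 : (∑' (r : {n : ℕ // Admissible b A n ∧ L ≤ (Nat.digits b n).length}),
            ∫⁻ x, f x ∂((Measure.dirac (((r : ℕ) : ℝ) / (b : ℝ) ^ L)).restrict (Set.Ico (0:ℝ) 1)))
          = ∑' (r : ℕ), Set.indicator {n : ℕ | Admissible b A n ∧ L ≤ (Nat.digits b n).length}
              (fun r => if ((r : ℝ) / (b : ℝ) ^ L ∈ Set.Ico (0:ℝ) 1)
                then f ((r : ℝ) / (b : ℝ) ^ L) else 0) r := by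
        rw [← tsum_subtype]
        exact tsum_congr fun r => hdirac _
      rw [step2, smul_eq_mul, ← ENNReal.tsum_mul_left]
      refine tsum_congr fun r => ?_
      rw [Set.indicator_apply]
      by_cases hadm : r ∈ {n : ℕ | Admissible b A n ∧ L ≤ (Nat.digits b n).length}
      · rw [if_pos hadm]
        by_cases hico : (r : ℝ) / (b : ℝ) ^ L ∈ Set.Ico (0:ℝ) 1
        · rw [if_pos hico, if_pos ⟨hadm, (mem_Ico_iff hb L r).1 hico⟩]
        · rw [if_neg hico, if_neg (fun hc => hico ((mem_Ico_iff hb L r).2 hc.2)), mul_zero]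
      · rw [if_neg hadm, if_neg (fun hc => hadm hc.1), mul_zero]
    rw [step1]
    have key : ∀ L r : ℕ,
        (if (∀ d ∈ Nat.digits b r, d ∈ A) ∧ r < b ^ L ∧ (0 ∈ A ∨ (Nat.digits b r).length = L)
         then ((b : ENNReal) ^ L)⁻¹ * f ((r : ℝ) / (b : ℝ) ^ L) else 0)
        = (if (Admissible b A r ∧ L ≤ (Nat.digits b r).length) ∧ r < b ^ L
           then ((b : ENNReal) ^ L)⁻¹ * f ((r : ℝ) / (b : ℝ) ^ L) else 0)
          + (if L = 0 ∧ r = 0 then ((b : ENNReal) ^ L)⁻¹ * f ((r : ℝ) / (b : ℝ) ^ L) else 0) := by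
      intro L r
      by_cases h00 : L = 0 ∧ r = 0
      · obtain ⟨rfl, rfl⟩ := h00
        rw [if_pos ⟨by simp, by simp [Nat.pow_pos], Or.inr (by simp)⟩,
          if_neg (fun hc => h0 (hc.1.1.2 rfl)), if_pos ⟨rfl, rfl⟩, zero_add]
      · rw [if_neg h00, add_zero]
        congr 1
        apply propext
        constructor
        · rintro ⟨hdig, hlt, hor⟩
          have hlen : (Nat.digits b r).length = L := hor.resolve_left h0
          have hr0 : r ≠ 0 := by
            rintro rfl
            apply h00
            constructor
            · rw [← hlen]; simp
            · rfl
          exact ⟨⟨⟨hdig, fun h => absurd h hr0⟩, hlen.ge⟩, hlt⟩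
        · rintro ⟨⟨⟨hdig, -⟩, hle⟩, hlt⟩
          exact ⟨hdig, hlt, Or.inr (le_antisymm ((len_le_iff hb).2 hlt) hle)⟩
    calc f 0 + ∑' L : ℕ, ∑' r : ℕ,
          (if (Admissible b A r ∧ L ≤ (Nat.digits b r).length) ∧ r < b ^ L
           then ((b : ENNReal) ^ L)⁻¹ * f ((r : ℝ) / (b : ℝ) ^ L) else 0)
        = (∑' L : ℕ, ∑' r : ℕ,
            (if (Admissible b A r ∧ L ≤ (Nat.digits b r).length) ∧ r < b ^ L
             then ((b : ENNReal) ^ L)⁻¹ * f ((r : ℝ) / (b : ℝ) ^ L) else 0))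
          + ∑' L : ℕ, ∑' r : ℕ,
            (if L = 0 ∧ r = 0 then ((b : ENNReal) ^ L)⁻¹ * f ((r : ℝ) / (b : ℝ) ^ L) else 0) := by
          rw [add_comm]
          congr 1
          rw [tsum_eq_single 0 (fun L hL => by
            rw [tsum_eq_single 0 (fun r hr => if_neg (fun hc => hr hc.2))]
            exact if_neg (fun hc => hL hc.1))]
          rw [tsum_eq_single 0 (fun r hr => if_neg (fun hc => hr hc.2))]
          rw [if_pos ⟨rfl, rfl⟩]
          simp
      _ = ∑' L : ℕ, ∑' r : ℕ,
            (if (∀ d ∈ Nat.digits b r, d ∈ A) ∧ r < b ^ L ∧ (0 ∈ A ∨ (Nat.digits b r).length = L)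
             then ((b : ENNReal) ^ L)⁻¹ * f ((r : ℝ) / (b : ℝ) ^ L) else 0) := by
          rw [← ENNReal.tsum_add]
          refine tsum_congr fun L => ?_
          rw [← ENNReal.tsum_add]
          exact tsum_congr fun r => (key L r).symm


private lemma value_eq {b : ℕ} (hb : 1 < b) {n L r : ℕ} (hn : 0 < n) (hr : r < b ^ L) :
    ((b : ENNReal) ^ L)⁻¹ * ENNReal.ofReal (1 / ((n : ℝ) + (r : ℝ) / (b : ℝ) ^ L))
      = (((n * b ^ L + r : ℕ) : ENNReal))⁻¹ := by
  have hb0 : (0:ℕ) < b := lt_trans Nat.zero_lt_one hb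
  have hB : (0 : ℝ) < (b : ℝ) ^ L := by positivity
  have hC : (0 : ℝ) < ((n * b ^ L + r : ℕ) : ℝ) := by
    have : 0 < n * b ^ L + r := Nat.add_pos_left (Nat.mul_pos hn (pow_pos hb0 L)) r
    exact_mod_cast this
  have hden : (n : ℝ) + (r : ℝ) / (b : ℝ) ^ L = ((n * b ^ L + r : ℕ) : ℝ) / (b : ℝ) ^ L := by
    have hc : ((n * b ^ L + r : ℕ) : ℝ) = (n : ℝ) * (b : ℝ) ^ L + (r : ℝ) := by
      push_cast; ring
    rw [hc, add_div, mul_div_assoc, div_self hB.ne', mul_one]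
  rw [hden, one_div_div, ENNReal.ofReal_div_of_pos hC,
    show ENNReal.ofReal ((b : ℝ) ^ L) = (b : ENNReal) ^ L by
      rw [ENNReal.ofReal_pow (by positivity), ENNReal.ofReal_natCast],
    ENNReal.ofReal_natCast, div_eq_mul_inv, ← mul_assoc,
    ENNReal.inv_mul_cancel (pow_ne_zero _ (by exact_mod_cast hb0.ne'))
      (ENNReal.pow_ne_top (ENNReal.natCast_ne_top b)), one_mul]

private lemma regroup {b : ℕ} (hb : 1 < b) {A : Finset ℕ} {l : ℕ} (hl : 1 ≤ l) :
    (∑ n ∈ (Finset.range (b ^ l)).filter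
        (fun n => Admissible b A n ∧ (Nat.digits b n).length = l),
      ∑' L : ℕ, ∑' r : ℕ,
        (if (∀ d ∈ Nat.digits b r, d ∈ A) ∧ r < b ^ L ∧ (0 ∈ A ∨ (Nat.digits b r).length = L)
         then (((n * b ^ L + r : ℕ) : ENNReal))⁻¹ else 0))
      = ∑' m : ℕ, if (∀ d ∈ Nat.digits b m, d ∈ A) ∧ l ≤ (Nat.digits b m).length
                  then ((m : ENNReal))⁻¹ else 0 := by
  classical
  have hb0 : (0:ℕ) < b := lt_trans Nat.zero_lt_one hb
  set Fl := (Finset.range (b ^ l)).filter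
      (fun n => Admissible b A n ∧ (Nat.digits b n).length = l) with hFl
  set g : ℕ × ℕ × ℕ → ENNReal := fun p =>
    if p.1 ∈ Fl ∧ ((∀ d ∈ Nat.digits b p.2.2, d ∈ A) ∧ p.2.2 < b ^ p.2.1
        ∧ (0 ∈ A ∨ (Nat.digits b p.2.2).length = p.2.1))
    then (((p.1 * b ^ p.2.1 + p.2.2 : ℕ) : ENNReal))⁻¹ else 0 with hg
  -- facts about members of Fl
  have hFl_mem : ∀ n ∈ Fl, Admissible b A n ∧ (Nat.digits b n).length = l ∧ 0 < n := by
    intro n hn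
    rw [hFl, Finset.mem_filter] at hn
    refine ⟨hn.2.1, hn.2.2, ?_⟩
    rcases Nat.eq_zero_or_pos n with rfl | h
    · exfalso; have := hn.2.2
      simp only [Nat.digits_zero, List.length_nil] at this
      omega
    · exact h
  have step1 : (∑ n ∈ Fl,
      ∑' L : ℕ, ∑' r : ℕ,
        (if (∀ d ∈ Nat.digits b r, d ∈ A) ∧ r < b ^ L ∧ (0 ∈ A ∨ (Nat.digits b r).length = L)
         then (((n * b ^ L + r : ℕ) : ENNReal))⁻¹ else 0))
      = ∑' p : ℕ × ℕ × ℕ, g p := by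
    have e1 : (∑' p : ℕ × ℕ × ℕ, g p) = ∑' n : ℕ, ∑' q : ℕ × ℕ, g (n, q) :=
      ENNReal.tsum_prod (f := fun n q => g (n, q))
    have : ∀ n : ℕ, (∑' q : ℕ × ℕ, g (n, q)) = ∑' L : ℕ, ∑' r : ℕ, g (n, L, r) :=
      fun n => ENNReal.tsum_prod (f := fun L r => g (n, L, r))
    rw [e1]
    rw [tsum_eq_sum (s := Fl) (f := fun n => ∑' q : ℕ × ℕ, g (n, q))
      (fun n hn => by
        beta_reduce
        rw [this n]
        refine (tsum_eq_single 0 (fun L _ => ?_)).trans ?_ <;>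
          · rw [tsum_eq_single 0 (fun r _ => by rw [hg]; beta_reduce; rw [if_neg (fun hc => hn hc.1)]) ]
            rw [hg]; beta_reduce; rw [if_neg (fun hc => hn hc.1)])]
    refine Finset.sum_congr rfl fun n hn => ?_
    rw [this n]
    refine tsum_congr fun L => tsum_congr fun r => ?_
    rw [hg]; beta_reduce
    by_cases hc : (∀ d ∈ Nat.digits b r, d ∈ A) ∧ r < b ^ L ∧ (0 ∈ A ∨ (Nat.digits b r).length = L)
    · rw [if_pos hc, if_pos ⟨hn, hc⟩]
    · rw [if_neg hc, if_neg (fun h => hc h.2)]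
  rw [step1]
  -- bijection
  refine (tsum_eq_tsum_of_ne_zero_bij
    (f := fun m : ℕ => if (∀ d ∈ Nat.digits b m, d ∈ A) ∧ l ≤ (Nat.digits b m).length
                  then ((m : ENNReal))⁻¹ else 0)
    (g := g)
    (fun x => x.1.1 * b ^ x.1.2.1 + x.1.2.2) ?_ ?_ ?_).symm
  · -- injective
    rintro ⟨⟨n₁, L₁, r₁⟩, hx₁⟩ ⟨⟨n₂, L₂, r₂⟩, hx₂⟩ heq
    simp only [Function.mem_support, hg] at hx₁ hx₂
    have hc₁ : n₁ ∈ Fl ∧ ((∀ d ∈ Nat.digits b r₁, d ∈ A) ∧ r₁ < b ^ L₁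
        ∧ (0 ∈ A ∨ (Nat.digits b r₁).length = L₁)) := by
      by_contra hc; exact hx₁ (if_neg hc)
    have hc₂ : n₂ ∈ Fl ∧ ((∀ d ∈ Nat.digits b r₂, d ∈ A) ∧ r₂ < b ^ L₂
        ∧ (0 ∈ A ∨ (Nat.digits b r₂).length = L₂)) := by
      by_contra hc; exact hx₂ (if_neg hc)
    obtain ⟨hn₁, hd₁, hr₁, -⟩ := hc₁
    obtain ⟨hn₂, hd₂, hr₂, -⟩ := hc₂
    obtain ⟨-, hlen₁, hpos₁⟩ := hFl_mem _ hn₁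
    obtain ⟨-, hlen₂, hpos₂⟩ := hFl_mem _ hn₂
    simp only at heq
    have hLeq : L₁ = L₂ := by
      have e1 := len_decomp hb hpos₁ hr₁
      have e2 := len_decomp hb hpos₂ hr₂
      rw [heq] at e1
      rw [e2, hlen₂] at e1
      rw [hlen₁] at e1
      omega
    subst hLeq
    have hre : r₁ = r₂ := by
      have h1 : (n₁ * b ^ L₁ + r₁) % b ^ L₁ = r₁ := by
        rw [mul_comm, Nat.mul_add_mod, Nat.mod_eq_of_lt hr₁]
      have h2 : (n₂ * b ^ L₁ + r₂) % b ^ L₁ = r₂ := by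
        rw [mul_comm, Nat.mul_add_mod, Nat.mod_eq_of_lt hr₂]
      rw [← h1, ← h2, heq]
    subst hre
    have hne : n₁ = n₂ := by
      have hp : 0 < b ^ L₁ := pow_pos hb0 L₁
      have : n₁ * b ^ L₁ = n₂ * b ^ L₁ := by omega
      exact Nat.eq_of_mul_eq_mul_right hp this
    subst hne
    rfl
  · -- surjective onto support of f
    rintro m hm
    simp only [Function.mem_support] at hm
    have hc : (∀ d ∈ Nat.digits b m, d ∈ A) ∧ l ≤ (Nat.digits b m).length := by
      by_contra hc; exact hm (if_neg hc)
    obtain ⟨hdig, hlen⟩ := hc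
    have hm0 : m ≠ 0 := by
      rintro rfl
      simp at hlen
      omega
    set L := (Nat.digits b m).length - l with hLdef
    have hBm : b ^ L ≤ m := by
      have h1 : b ^ (Nat.digits b m).length ≤ b * m :=
        Nat.base_pow_length_digits_le b m hb hm0
      have h2 : b ^ ((Nat.digits b m).length - 1) * b ≤ m * b := by
        calc b ^ ((Nat.digits b m).length - 1) * b = b ^ (Nat.digits b m).length := by
              rw [← pow_succ]; congr 1
              have : 1 ≤ (Nat.digits b m).length := le_trans hl hlen
              omega
          _ ≤ b * m := h1
          _ = m * b := mul_comm _ _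
      have h3 : b ^ ((Nat.digits b m).length - 1) ≤ m := Nat.le_of_mul_le_mul_right h2 hb0
      calc b ^ L ≤ b ^ ((Nat.digits b m).length - 1) :=
            Nat.pow_le_pow_right hb0 (by omega)
        _ ≤ m := h3
    set n := m / b ^ L with hn
    set r := m % b ^ L with hr
    have hp : 0 < b ^ L := pow_pos hb0 L
    have hnpos : 0 < n := Nat.div_pos hBm hp
    have hrlt : r < b ^ L := Nat.mod_lt _ hp
    have hmeq : n * b ^ L + r = m := by
      rw [hn, hr, mul_comm]
      exact Nat.div_add_mod m (b ^ L)
    have hdm := digits_decomp hb hnpos hrlt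
    rw [hmeq] at hdm
    have hlenm := len_decomp hb hnpos hrlt
    rw [hmeq] at hlenm
    have hlenn : (Nat.digits b n).length = l := by omega
    have hdign : ∀ d ∈ Nat.digits b n, d ∈ A := by
      intro d hd
      exact hdig d (by rw [hdm]; simp [hd])
    have hdigr : ∀ d ∈ Nat.digits b r, d ∈ A := by
      intro d hd
      exact hdig d (by rw [hdm]; simp [hd])
    have hthird : 0 ∈ A ∨ (Nat.digits b r).length = L := by
      by_cases h0 : 0 ∈ A
      · exact Or.inl h0
      · right
        have hle : (Nat.digits b r).length ≤ L := (len_le_iff hb).2 hrlt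
        rcases Nat.lt_or_ge (Nat.digits b r).length L with hlt | hge
        · exfalso
          apply h0
          apply hdig 0
          rw [hdm]
          refine List.mem_append.mpr (Or.inl (List.mem_append.mpr (Or.inr ?_)))
          exact List.mem_replicate.mpr ⟨by omega, rfl⟩
        · omega
    have hnFl : n ∈ Fl := by
      rw [hFl, Finset.mem_filter, Finset.mem_range]
      refine ⟨?_, ⟨hdign, fun h => absurd h hnpos.ne'⟩, hlenn⟩
      have := Nat.lt_base_pow_length_digits (b := b) (m := n) hb
      rwa [hlenn] at this
    refine ⟨⟨(n, L, r), ?_⟩, ?_⟩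
    · simp only [Function.mem_support, hg]
      beta_reduce
      rw [if_pos ⟨hnFl, hdigr, hrlt, hthird⟩]
      exact ENNReal.inv_ne_zero.mpr (ENNReal.natCast_ne_top _)
    · simpa using hmeq
  · -- values agree
    rintro ⟨⟨n, L, r⟩, hx⟩
    simp only [Function.mem_support, hg] at hx
    have hc : n ∈ Fl ∧ ((∀ d ∈ Nat.digits b r, d ∈ A) ∧ r < b ^ L
        ∧ (0 ∈ A ∨ (Nat.digits b r).length = L)) := by
      by_contra hc; exact hx (if_neg hc)
    obtain ⟨hnFl, hdigr, hrlt, hthird⟩ := hc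
    obtain ⟨⟨hdign, -⟩, hlenn, hnpos⟩ := hFl_mem _ hnFl
    have hdm := digits_decomp hb hnpos hrlt
    have hlenm := len_decomp hb hnpos hrlt
    have hcond : (∀ d ∈ Nat.digits b (n * b ^ L + r), d ∈ A)
        ∧ l ≤ (Nat.digits b (n * b ^ L + r)).length := by
      constructor
      · intro d hd
        rw [hdm] at hd
        rcases List.mem_append.mp hd with hd' | hd'
        · rcases List.mem_append.mp hd' with h1 | h1
          · exact hdigr d h1
          · obtain ⟨hk, rfl⟩ := List.mem_replicate.mp h1
            rcases hthird with h0 | hlenr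
            · exact h0
            · exfalso; omega
        · exact hdign d hd'
      · rw [hlenm, hlenn]; omega
    simp only [hg]
    beta_reduce
    rw [if_pos hcond, if_pos ⟨hnFl, hdigr, hrlt, hthird⟩]

theorem kempner_sum_level_integral (b : ℕ) (hb : 1 < b) (A : Finset ℕ)
    (hA : A ⊂ Finset.range b) (hAne : A.Nonempty) (hA0 : A ≠ {0})
    (l : ℕ) (hl : 1 ≤ l) :
    kempnerSum b A
      = ∑ n ∈ (Finset.range (b ^ (l - 1))).filter (fun n => 0 < n ∧ Admissible b A n),
          (1 : ℝ) / (n : ℝ)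
        + ∑ n ∈ (Finset.range (b ^ l)).filter
              (fun n => Admissible b A n ∧ (Nat.digits b n).length = l),
            ∫ x in Set.Ico (0 : ℝ) 1, 1 / ((n : ℝ) + x) ∂(kempnerMeasure b A) := by
  classical
  have hb0 : (0:ℕ) < b := lt_trans Nat.zero_lt_one hb
  have hgtop : (∑' m : ℕ, if 0 < m ∧ Admissible b A m then ((m : ENNReal))⁻¹ else 0) ≠ ⊤ :=
    total_ne_top hb hA
  have hFl_mem : ∀ n ∈ (Finset.range (b ^ l)).filter
      (fun n => Admissible b A n ∧ (Nat.digits b n).length = l),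
      Admissible b A n ∧ (Nat.digits b n).length = l ∧ 0 < n := by
    intro n hn
    rw [Finset.mem_filter] at hn
    refine ⟨hn.2.1, hn.2.2, ?_⟩
    rcases Nat.eq_zero_or_pos n with rfl | h
    · exfalso
      have := hn.2.2
      simp only [Nat.digits_zero, List.length_nil] at this
      omega
    · exact h
  -- pointwise split of the total sum
  have hpt : ∀ m : ℕ, (if 0 < m ∧ Admissible b A m then ((m : ENNReal))⁻¹ else 0)
      = (if (0 < m ∧ Admissible b A m) ∧ m < b ^ (l - 1) then ((m : ENNReal))⁻¹ else 0)
        + (if (∀ d ∈ Nat.digits b m, d ∈ A) ∧ l ≤ (Nat.digits b m).length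
           then ((m : ENNReal))⁻¹ else 0) := by
    intro m
    by_cases c1 : 0 < m ∧ Admissible b A m
    · have hm0 : m ≠ 0 := c1.1.ne'
      by_cases c2 : m < b ^ (l - 1)
      · have hlen : (Nat.digits b m).length ≤ l - 1 := (len_le_iff hb).2 c2
        rw [if_pos c1, if_pos ⟨c1, c2⟩,
          if_neg (fun hc => by have := hc.2; omega), add_zero]
      · have hlen : ¬ (Nat.digits b m).length ≤ l - 1 := fun h => c2 ((len_le_iff hb).1 h)
        rw [if_pos c1, if_neg (fun hc => c2 hc.2), if_pos ⟨c1.2.1, by omega⟩, zero_add]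
    · rw [if_neg c1, if_neg (fun hc => c1 hc.1), if_neg (fun hc => ?_), add_zero]
      have hm0 : m ≠ 0 := by
        rintro rfl
        have := hc.2
        simp only [Nat.digits_zero, List.length_nil] at this
        omega
      exact c1 ⟨Nat.pos_of_ne_zero hm0, hc.1, fun h => absurd h hm0⟩
  -- sum of the small part
  have hsmallE : (∑' m : ℕ,
      if (0 < m ∧ Admissible b A m) ∧ m < b ^ (l - 1) then ((m : ENNReal))⁻¹ else 0)
      = ∑ m ∈ (Finset.range (b ^ (l - 1))).filter (fun n => 0 < n ∧ Admissible b A n),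
          ((m : ENNReal))⁻¹ := by
    rw [tsum_eq_sum (s := (Finset.range (b ^ (l - 1))).filter (fun n => 0 < n ∧ Admissible b A n))
      (fun m hm => if_neg (fun hc => hm
        (Finset.mem_filter.mpr ⟨Finset.mem_range.mpr hc.2, hc.1⟩)))]
    refine Finset.sum_congr rfl fun m hm => ?_
    rw [Finset.mem_filter, Finset.mem_range] at hm
    exact if_pos ⟨hm.2, hm.1⟩
  -- ENNReal split
  have hsplitE : (∑' m : ℕ, if 0 < m ∧ Admissible b A m then ((m : ENNReal))⁻¹ else 0)
      = (∑ m ∈ (Finset.range (b ^ (l - 1))).filter (fun n => 0 < n ∧ Admissible b A n),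
          ((m : ENNReal))⁻¹)
        + ∑' m : ℕ, (if (∀ d ∈ Nat.digits b m, d ∈ A) ∧ l ≤ (Nat.digits b m).length
            then ((m : ENNReal))⁻¹ else 0) := by
    rw [← hsmallE, ← ENNReal.tsum_add]
    exact tsum_congr hpt
  -- lintegral identity for each n
  have hI : ∀ n ∈ (Finset.range (b ^ l)).filter
      (fun n => Admissible b A n ∧ (Nat.digits b n).length = l),
      (∫⁻ x in Set.Ico (0:ℝ) 1, ENNReal.ofReal (1/((n:ℝ) + x)) ∂(kempnerMeasure b A))
      = ∑' L : ℕ, ∑' r : ℕ,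
          (if (∀ d ∈ Nat.digits b r, d ∈ A) ∧ r < b ^ L ∧ (0 ∈ A ∨ (Nat.digits b r).length = L)
           then (((n * b ^ L + r : ℕ) : ENNReal))⁻¹ else 0) := by
    intro n hn
    obtain ⟨-, -, hnpos⟩ := hFl_mem n hn
    have hmeas : Measurable fun x : ℝ => ENNReal.ofReal (1/((n:ℝ) + x)) := by
      apply Measurable.ennreal_ofReal
      simp only [one_div]
      exact (measurable_const.add measurable_id).inv
    rw [lint_eq b hb A _ hmeas]
    refine tsum_congr fun L => tsum_congr fun r => ?_
    by_cases hc : (∀ d ∈ Nat.digits b r, d ∈ A) ∧ r < b ^ L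
        ∧ (0 ∈ A ∨ (Nat.digits b r).length = L)
    · rw [if_pos hc, if_pos hc, value_eq hb hnpos hc.2.1]
    · rw [if_neg hc, if_neg hc]
  -- master identity in ENNReal
  have hmaster : (∑' m : ℕ, if 0 < m ∧ Admissible b A m then ((m : ENNReal))⁻¹ else 0)
      = (∑ m ∈ (Finset.range (b ^ (l - 1))).filter (fun n => 0 < n ∧ Admissible b A n),
          ((m : ENNReal))⁻¹)
        + ∑ n ∈ (Finset.range (b ^ l)).filter
            (fun n => Admissible b A n ∧ (Nat.digits b n).length = l),
          ∫⁻ x in Set.Ico (0:ℝ) 1, ENNReal.ofReal (1/((n:ℝ) + x)) ∂(kempnerMeasure b A) := by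
    rw [hsplitE]
    congr 1
    rw [← regroup hb hl]
    exact Finset.sum_congr rfl fun n hn => (hI n hn).symm
  -- finiteness facts
  have hfin_small : (∑ m ∈ (Finset.range (b ^ (l - 1))).filter
      (fun n => 0 < n ∧ Admissible b A n), ((m : ENNReal))⁻¹) ≠ ⊤ := by
    refine ne_top_of_le_ne_top hgtop ?_
    rw [hmaster]
    exact le_add_right le_rfl
  have hfin_sumI : (∑ n ∈ (Finset.range (b ^ l)).filter
      (fun n => Admissible b A n ∧ (Nat.digits b n).length = l),
      ∫⁻ x in Set.Ico (0:ℝ) 1, ENNReal.ofReal (1/((n:ℝ) + x)) ∂(kempnerMeasure b A)) ≠ ⊤ := by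
    refine ne_top_of_le_ne_top hgtop ?_
    rw [hmaster]
    exact le_add_left le_rfl
  have hfin_I : ∀ n ∈ (Finset.range (b ^ l)).filter
      (fun n => Admissible b A n ∧ (Nat.digits b n).length = l),
      (∫⁻ x in Set.Ico (0:ℝ) 1, ENNReal.ofReal (1/((n:ℝ) + x)) ∂(kempnerMeasure b A)) ≠ ⊤ := by
    intro n hn
    refine ne_top_of_le_ne_top hfin_sumI ?_
    exact Finset.single_le_sum
      (f := fun n : ℕ => ∫⁻ x in Set.Ico (0:ℝ) 1, ENNReal.ofReal (1/((n:ℝ) + x)) ∂(kempnerMeasure b A))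
      (s := (Finset.range (b ^ l)).filter
        (fun n => Admissible b A n ∧ (Nat.digits b n).length = l))
      (fun m _ => zero_le) hn
  -- real side: kempnerSum
  have hL : kempnerSum b A
      = (∑' m : ℕ, if 0 < m ∧ Admissible b A m then ((m : ENNReal))⁻¹ else 0).toReal := by
    have h1 : kempnerSum b A = ∑' m : ℕ,
        Set.indicator {x : ℕ | 0 < x ∧ Admissible b A x} (fun m => (1:ℝ)/(m:ℝ)) m :=
      tsum_subtype {x : ℕ | 0 < x ∧ Admissible b A x} (fun m => (1:ℝ)/((m:ℕ):ℝ))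
    have h2 : (∑' m : ℕ, if 0 < m ∧ Admissible b A m then ((m : ENNReal))⁻¹ else 0).toReal
        = ∑' m : ℕ, ((if 0 < m ∧ Admissible b A m then ((m : ENNReal))⁻¹ else 0)).toReal := by
      refine ENNReal.tsum_toReal_eq fun m => ?_
      split_ifs with hc
      · exact ENNReal.inv_ne_top.mpr (Nat.cast_ne_zero.mpr hc.1.ne')
      · exact ENNReal.zero_ne_top
    rw [h1, h2]
    refine tsum_congr fun m => ?_
    rw [Set.indicator_apply]
    by_cases hc : m ∈ {x : ℕ | 0 < x ∧ Admissible b A x}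
    · rw [if_pos hc, if_pos (by exact hc), ENNReal.toReal_inv, ENNReal.toReal_natCast, one_div]
    · rw [if_neg hc, if_neg (by exact hc), ENNReal.toReal_zero]
  -- real side: small sum
  have hsmallR : (∑ m ∈ (Finset.range (b ^ (l - 1))).filter
      (fun n => 0 < n ∧ Admissible b A n), ((m : ENNReal))⁻¹).toReal
      = ∑ m ∈ (Finset.range (b ^ (l - 1))).filter (fun n => 0 < n ∧ Admissible b A n),
        (1:ℝ)/(m:ℝ) := by
    rw [ENNReal.toReal_sum (fun m hm => ENNReal.inv_ne_top.mpr
      (Nat.cast_ne_zero.mpr (Finset.mem_filter.mp hm).2.1.ne'))]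
    exact Finset.sum_congr rfl fun m _ => by
      rw [ENNReal.toReal_inv, ENNReal.toReal_natCast, one_div]
  -- real side: integrals
  have hintR : ∀ n ∈ (Finset.range (b ^ l)).filter
      (fun n => Admissible b A n ∧ (Nat.digits b n).length = l),
      (∫ x in Set.Ico (0:ℝ) 1, 1/((n:ℝ) + x) ∂(kempnerMeasure b A))
      = (∫⁻ x in Set.Ico (0:ℝ) 1, ENNReal.ofReal (1/((n:ℝ) + x))
          ∂(kempnerMeasure b A)).toReal := by
    intro n hn
    refine integral_eq_lintegral_of_nonneg_ae ?_ ?_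
    · refine (ae_restrict_iff' measurableSet_Ico).2 (Filter.Eventually.of_forall fun x hx => ?_)
      exact div_nonneg zero_le_one (add_nonneg (Nat.cast_nonneg n) hx.1)
    · apply Measurable.aestronglyMeasurable
      simp only [one_div]
      exact (measurable_const.add measurable_id).inv
  -- conclude
  rw [hL, hmaster, ENNReal.toReal_add hfin_small hfin_sumI, hsmallR]
  congr 1
  rw [ENNReal.toReal_sum hfin_I]
  exact Finset.sum_congr rfl fun n hn => (hintR n hn).symm
end

section
/- The exponential generating function E(t) = ∫_{[0,1)} e^{tx} dμ(x) satisfies, for every real t, the functional equation E(bt) = 1 + (1/b)(Σ_{a∈A} e^{at}) E(t). -/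
open MeasureTheory

namespace KempnerAux

variable {b : ℕ} {A : Finset ℕ}

def Flevel (b : ℕ) (A : Finset ℕ) (l : ℕ) : Finset ℕ :=
  (Finset.range (b ^ l)).filter fun n => ∀ i < l, n / b ^ i % b ∈ A

lemma mem_Flevel {l n : ℕ} :
    n ∈ Flevel b A l ↔ n < b ^ l ∧ ∀ i < l, n / b ^ i % b ∈ A := by
  simp [Flevel]

lemma Flevel_zero : Flevel b A 0 = {0} := by
  ext n
  simp [mem_Flevel, Nat.lt_one_iff]

lemma digit_shift (hb : 0 < b) (a m i k : ℕ) :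
    (a * b ^ (i + k + 1) + m) / b ^ i % b = m / b ^ i % b := by
  have h1 : a * b ^ (i + k + 1) + m = b ^ i * (b * (a * b ^ k)) + m := by ring
  rw [h1, Nat.mul_add_div (pow_pos hb i), Nat.mul_add_mod]

lemma mod_digit (hb : 0 < b) (n i k : ℕ) :
    n % b ^ (i + k + 1) / b ^ i % b = n / b ^ i % b := by
  conv_rhs => rw [← Nat.div_add_mod n (b ^ (i + k + 1)),
    Nat.mul_comm (b ^ (i + k + 1)) (n / b ^ (i + k + 1)), digit_shift hb]

lemma top_digit (hb : 0 < b) (a m l : ℕ) (hm : m < b ^ l) :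
    (a * b ^ l + m) / b ^ l = a := by
  have h1 : a * b ^ l + m = b ^ l * a + m := by ring
  rw [h1, Nat.mul_add_div (pow_pos hb l), Nat.div_eq_of_lt hm, Nat.add_zero]

lemma combine_mem (hb : 1 < b) (hA : A ⊆ Finset.range b) {l a m : ℕ}
    (ha : a ∈ A) (hm : m ∈ Flevel b A l) :
    a * b ^ l + m ∈ Flevel b A (l + 1) := by
  have hb0 : 0 < b := by omega
  have hab : a < b := Finset.mem_range.mp (hA ha)
  rw [mem_Flevel] at hm ⊢
  obtain ⟨hmlt, hmdig⟩ := hm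
  constructor
  · have h2 : (a + 1) * b ^ l ≤ b * b ^ l := Nat.mul_le_mul_right _ (by omega)
    have h3 : b * b ^ l = b ^ (l + 1) := (pow_succ' b l).symm
    have h4 : a * b ^ l + b ^ l = (a + 1) * b ^ l := by ring
    omega
  · intro i hi
    rcases Nat.lt_or_ge i l with h | h
    · obtain ⟨k, hk⟩ : ∃ k, l = i + k + 1 := ⟨l - i - 1, by omega⟩
      subst hk
      rw [digit_shift hb0]
      exact hmdig i h
    · have : i = l := by omega
      subst this
      rw [top_digit hb0 a m i hmlt, Nat.mod_eq_of_lt hab]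
      exact ha

lemma split_mem (hb : 1 < b) {l n : ℕ} (hn : n ∈ Flevel b A (l + 1)) :
    n / b ^ l ∈ A ∧ n % b ^ l ∈ Flevel b A l := by
  have hb0 : 0 < b := by omega
  rw [mem_Flevel] at hn
  obtain ⟨hlt, hdig⟩ := hn
  have hlt' : n < b * b ^ l := by rw [← pow_succ']; exact hlt
  have hdivlt : n / b ^ l < b := by
    rw [Nat.div_lt_iff_lt_mul (pow_pos hb0 l)]
    exact hlt'
  have htop : n / b ^ l % b = n / b ^ l := Nat.mod_eq_of_lt hdivlt
  have hmem : n / b ^ l ∈ A := by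
    have := hdig l (by omega)
    rwa [htop] at this
  refine ⟨hmem, ?_⟩
  rw [mem_Flevel]
  refine ⟨Nat.mod_lt _ (pow_pos hb0 l), fun i hi => ?_⟩
  obtain ⟨k, hk⟩ : ∃ k, l = i + k + 1 := ⟨l - i - 1, by omega⟩
  subst hk
  rw [mod_digit hb0]
  exact hdig i (by omega)

lemma sum_Flevel_succ (hb : 1 < b) (hA : A ⊆ Finset.range b) {M : Type*} [AddCommMonoid M]
    (l : ℕ) (f : ℕ → M) :
    ∑ n ∈ Flevel b A (l + 1), f n = ∑ a ∈ A, ∑ m ∈ Flevel b A l, f (a * b ^ l + m) := by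
  have hb0 : 0 < b := by omega
  rw [← Finset.sum_product']
  refine Finset.sum_nbij' (fun n => (n / b ^ l, n % b ^ l)) (fun p => p.1 * b ^ l + p.2)
    ?_ ?_ ?_ ?_ ?_
  · intro n hn
    have := split_mem hb hn
    exact Finset.mem_product.mpr ⟨this.1, this.2⟩
  · intro p hp
    rw [Finset.mem_product] at hp
    exact combine_mem hb hA hp.1 hp.2
  · intro n hn
    exact Nat.div_add_mod' n (b ^ l)
  · intro p hp
    rw [Finset.mem_product] at hp
    have hm : p.2 < b ^ l := (mem_Flevel.mp hp.2).1
    have h1 := top_digit hb0 p.1 p.2 l hm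
    have h2 : (p.1 * b ^ l + p.2) % b ^ l = p.2 := by
      rw [Nat.mul_comm, Nat.mul_add_mod]
      exact Nat.mod_eq_of_lt hm
    simp [h1, h2]
  · intro n hn
    simp only
    rw [Nat.div_add_mod' n (b ^ l)]

lemma card_Flevel (hb : 1 < b) (hA : A ⊆ Finset.range b) (l : ℕ) :
    (Flevel b A l).card = A.card ^ l := by
  induction l with
  | zero => simp [Flevel_zero]
  | succ l ih =>
    rw [Finset.card_eq_sum_ones, sum_Flevel_succ hb hA l]
    simp [← Finset.card_eq_sum_ones, ih, pow_succ, mul_comm]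




lemma forall_succ_iff (hb : 1 < b) {n l : ℕ} :
    (∀ i < l + 1, n / b ^ i % b ∈ A) ↔ (n % b ∈ A ∧ ∀ i < l, n / b / b ^ i % b ∈ A) := by
  have hdd : ∀ i : ℕ, n / b / b ^ i = n / b ^ (i + 1) := by
    intro i; rw [Nat.div_div_eq_div_mul, ← pow_succ']
  constructor
  · intro h
    refine ⟨by simpa using h 0 (by omega), fun i hi => ?_⟩
    rw [hdd i]; exact h (i + 1) (by omega)
  · rintro ⟨h0, h⟩ i hi
    match i with
    | 0 => simpa using h0
    | (i + 1) =>
      rw [← hdd i]; exact h i (by omega)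

lemma admissible_iff_of_mem (hb : 1 < b) (h0 : 0 ∈ A) :
    ∀ l n, n < b ^ l → (Admissible b A n ↔ ∀ i < l, n / b ^ i % b ∈ A) := by
  intro l
  induction l with
  | zero =>
    intro n hn
    have : n = 0 := by simpa using hn
    subst this
    simp [Admissible, h0]
  | succ l ih =>
    intro n hn
    rcases Nat.eq_zero_or_pos n with rfl | hp
    · simp [Admissible, h0]
    · have hnb : n / b < b ^ l := by
        rw [Nat.div_lt_iff_lt_mul (by omega), ← pow_succ]
        exact hn
      rw [forall_succ_iff hb]
      have hdig : Nat.digits b n = n % b :: Nat.digits b (n / b) := Nat.digits_def' hb hp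
      rw [← ih (n / b) hnb]
      constructor
      · rintro ⟨hd, -⟩
        rw [hdig] at hd
        exact ⟨hd _ List.mem_cons_self,
          ⟨fun d hdm => hd d (List.mem_cons_of_mem _ hdm), fun _ => h0⟩⟩
      · rintro ⟨h1, h2, -⟩
        refine ⟨?_, fun _ => h0⟩
        rw [hdig]
        intro d hd
        rcases List.mem_cons.mp hd with rfl | hd
        · exact h1
        · exact h2 d hd

lemma admissible_len_iff (hb : 1 < b) (h0 : 0 ∉ A) :
    ∀ l n, n < b ^ (l + 1) →
      ((Admissible b A n ∧ l + 1 ≤ (Nat.digits b n).length) ↔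
        ∀ i < l + 1, n / b ^ i % b ∈ A) := by
  intro l
  induction l with
  | zero =>
    intro n hn
    rcases Nat.eq_zero_or_pos n with rfl | hp
    · refine iff_of_false (by simp) (fun h => h0 (by simpa using h 0 (by omega)))
    · have hn' : n < b := by simpa using hn
      have hq : n / b = 0 := Nat.div_eq_of_lt hn'
      have hdig : Nat.digits b n = [n % b] := by
        rw [Nat.digits_def' hb hp, hq, Nat.digits_zero]
      have hnm : n % b = n := Nat.mod_eq_of_lt hn'
      constructor
      · rintro ⟨⟨hd, -⟩, -⟩ i hi
        have : i = 0 := by omega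
        subst this
        simpa [hnm] using hd (n % b) (by rw [hdig]; exact List.mem_singleton_self _)
      · intro h
        have h0' : n % b ∈ A := by simpa using h 0 (by omega)
        refine ⟨⟨?_, fun hn0 => absurd hn0 (by omega)⟩, by rw [hdig]; simp⟩
        rw [hdig]
        intro d hd
        rcases List.mem_singleton.mp hd with rfl
        exact h0'
  | succ l ih =>
    intro n hn
    rcases Nat.eq_zero_or_pos n with rfl | hp
    · refine iff_of_false (by simp) (fun h => h0 (by simpa using h 0 (by omega)))
    · have hdig : Nat.digits b n = n % b :: Nat.digits b (n / b) := Nat.digits_def' hb hp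
      have hnb : n / b < b ^ (l + 1) := by
        rw [Nat.div_lt_iff_lt_mul (by omega), ← pow_succ]
        exact hn
      rw [forall_succ_iff hb]
      rcases Nat.eq_zero_or_pos (n / b) with hq | hq
      · refine iff_of_false ?_ ?_
        · rintro ⟨-, hlen⟩
          rw [hdig, hq] at hlen
          simp at hlen
        · rintro ⟨-, h2⟩
          have := h2 0 (by omega)
          rw [hq] at this
          simp at this
          exact h0 this
      · rw [← ih (n / b) hnb]
        constructor
        · rintro ⟨⟨hd, -⟩, hlen⟩
          rw [hdig] at hd hlen
          simp only [List.length_cons] at hlen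
          exact ⟨hd _ List.mem_cons_self,
            ⟨⟨fun d hdm => hd d (List.mem_cons_of_mem _ hdm),
              fun h => absurd h (by omega)⟩, by omega⟩⟩
        · rintro ⟨h1, ⟨hadm, -⟩, hlen⟩
          refine ⟨⟨?_, fun h => absurd h (by omega)⟩, ?_⟩
          · rw [hdig]
            intro d hd
            rcases List.mem_cons.mp hd with rfl | hd
            · exact h1
            · exact hadm d hd
          · rw [hdig]
            simp only [List.length_cons]
            omega




noncomputable def Slev (b : ℕ) (A : Finset ℕ) (c : ℝ) (l : ℕ) : ℝ :=
  ∑ n ∈ Flevel b A l, Real.exp (c * n / (b : ℝ) ^ l)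

lemma Slev_zero (c : ℝ) : Slev b A c 0 = 1 := by
  simp [Slev, Flevel_zero]

lemma Slev_succ (hb : 1 < b) (hA : A ⊆ Finset.range b) (c : ℝ) (l : ℕ) :
    Slev b A c (l + 1) = (∑ a ∈ A, Real.exp (c * a / b)) * Slev b A (c / b) l := by
  have hbR : (0 : ℝ) < b := by exact_mod_cast (by omega : 0 < b)
  rw [Slev, sum_Flevel_succ hb hA l, Finset.sum_mul]
  refine Finset.sum_congr rfl fun a _ => ?_
  rw [Slev, Finset.mul_sum]
  refine Finset.sum_congr rfl fun m _ => ?_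
  rw [← Real.exp_add]
  congr 1
  have hbne : (b : ℝ) ≠ 0 := by positivity
  push_cast
  field_simp
  ring

lemma Slev_nonneg (c : ℝ) (l : ℕ) : 0 ≤ Slev b A c l :=
  Finset.sum_nonneg fun n _ => (Real.exp_pos _).le

lemma Slev_le (hb : 1 < b) (hA : A ⊆ Finset.range b) (c : ℝ) (l : ℕ) :
    Slev b A c l ≤ (A.card : ℝ) ^ l * Real.exp |c| := by
  have hbR : (0 : ℝ) < b := by exact_mod_cast (by omega : 0 < b)
  have hbl : (0 : ℝ) < (b : ℝ) ^ l := by positivity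
  have key : ∀ n ∈ Flevel b A l, Real.exp (c * n / (b : ℝ) ^ l) ≤ Real.exp |c| := by
    intro n hn
    have hnlt : (n : ℝ) < (b : ℝ) ^ l := by
      have := (mem_Flevel.mp hn).1
      exact_mod_cast (by push_cast; exact_mod_cast this : (n : ℝ) < ((b ^ l : ℕ) : ℝ))
    apply Real.exp_le_exp.mpr
    have hx0 : 0 ≤ (n : ℝ) / (b : ℝ) ^ l := by positivity
    have hx1 : (n : ℝ) / (b : ℝ) ^ l ≤ 1 := by
      rw [div_le_one hbl]; exact hnlt.le
    have : c * n / (b : ℝ) ^ l = c * ((n : ℝ) / (b : ℝ) ^ l) := by ring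
    rw [this]
    calc c * ((n : ℝ) / (b : ℝ) ^ l) ≤ |c| * ((n : ℝ) / (b : ℝ) ^ l) :=
          mul_le_mul_of_nonneg_right (le_abs_self c) hx0
      _ ≤ |c| * 1 := mul_le_mul_of_nonneg_left hx1 (abs_nonneg c)
      _ = |c| := mul_one _
  calc Slev b A c l ≤ (Flevel b A l).card • Real.exp |c| :=
        Finset.sum_le_card_nsmul _ _ _ key
    _ = (A.card : ℝ) ^ l * Real.exp |c| := by
        rw [card_Flevel hb hA, nsmul_eq_mul]
        push_cast
        ring

lemma summable_slev (hb : 1 < b) (hA : A ⊆ Finset.range b) (hcard : A.card < b) (c : ℝ) :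
    Summable fun l : ℕ => ((b : ℝ) ^ l)⁻¹ * Slev b A c l := by
  have hbR : (0 : ℝ) < b := by exact_mod_cast (by omega : 0 < b)
  have hr0 : (0 : ℝ) ≤ (A.card : ℝ) / b := by positivity
  have hr1 : (A.card : ℝ) / b < 1 := by
    rw [div_lt_one hbR]; exact_mod_cast hcard
  have hgeo : Summable fun l : ℕ => Real.exp |c| * ((A.card : ℝ) / b) ^ l :=
    (summable_geometric_of_lt_one hr0 hr1).mul_left _
  refine Summable.of_nonneg_of_le (fun l => ?_) (fun l => ?_) hgeo
  · have := Slev_nonneg (b := b) (A := A) c l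
    positivity
  · have hbl : (0 : ℝ) < (b : ℝ) ^ l := by positivity
    calc ((b : ℝ) ^ l)⁻¹ * Slev b A c l
        ≤ ((b : ℝ) ^ l)⁻¹ * ((A.card : ℝ) ^ l * Real.exp |c|) := by
          exact mul_le_mul_of_nonneg_left (Slev_le hb hA c l) (by positivity)
      _ = Real.exp |c| * ((A.card : ℝ) / b) ^ l := by
          rw [div_pow]
          field_simp




lemma mem_Ico_iff (hb : 1 < b) (l n : ℕ) :
    ((n : ℝ) / (b : ℝ) ^ l ∈ Set.Ico (0 : ℝ) 1) ↔ n < b ^ l := by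
  have hbR : (0 : ℝ) < b := by exact_mod_cast (by omega : 0 < b)
  have hbl : (0 : ℝ) < (b : ℝ) ^ l := by positivity
  have h1 : (0 : ℝ) ≤ (n : ℝ) / (b : ℝ) ^ l := by positivity
  rw [Set.mem_Ico, div_lt_one hbl,
    show ((b : ℝ) ^ l) = ((b ^ l : ℕ) : ℝ) by push_cast; ring, Nat.cast_lt]
  simp [h1]

lemma tsum_subtype_level {P : ℕ → Prop} {l : ℕ} (F : Finset ℕ) (g : ℝ → ENNReal)
    (hPF : ∀ n : ℕ, P n → (((n : ℝ) / (b : ℝ) ^ l ∈ Set.Ico (0 : ℝ) 1) ↔ n ∈ F))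
    (hFP : ∀ n ∈ F, P n) :
    (∑' n : {n : ℕ // P n},
        if ((n : ℕ) : ℝ) / (b : ℝ) ^ l ∈ Set.Ico (0 : ℝ) 1
        then g (((n : ℕ) : ℝ) / (b : ℝ) ^ l) else 0)
      = ∑ n ∈ F, g ((n : ℝ) / (b : ℝ) ^ l) := by
  classical
  set f : ℕ → ENNReal := fun m =>
    if (m : ℝ) / (b : ℝ) ^ l ∈ Set.Ico (0 : ℝ) 1 then g ((m : ℝ) / (b : ℝ) ^ l) else 0 with hf
  have h1 : (∑' n : {n : ℕ // P n}, f (n : ℕ)) = ∑' m : ℕ, Set.indicator {k | P k} f m :=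
    tsum_subtype {k | P k} f
  rw [h1, tsum_eq_sum (s := F) ?_]
  · refine Finset.sum_congr rfl fun n hn => ?_
    rw [Set.indicator_of_mem (show n ∈ {k | P k} from hFP n hn), hf]
    simp only
    rw [if_pos ((hPF n (hFP n hn)).mpr hn)]
  · intro n hn
    by_cases hp : P n
    · rw [Set.indicator_of_mem (show n ∈ {k | P k} from hp), hf]
      simp only
      rw [if_neg]
      intro hmem
      exact hn ((hPF n hp).mp hmem)
    · exact Set.indicator_of_notMem (show n ∉ {k | P k} from hp) f

set_option maxHeartbeats 2000000 in
lemma key_integral (hb : 1 < b) (hA : A ⊆ Finset.range b) (hcard : A.card < b) (c : ℝ) :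
    ∫ x in Set.Ico (0 : ℝ) 1, Real.exp (c * x) ∂(kempnerMeasure b A)
      = ∑' l : ℕ, ((b : ℝ) ^ l)⁻¹ * Slev b A c l := by
  classical
  have hbR : (0 : ℝ) < b := by exact_mod_cast (by omega : 0 < b)
  have hcont : Continuous fun x : ℝ => Real.exp (c * x) :=
    Real.continuous_exp.comp (continuous_const.mul continuous_id)
  have hmeas : Measurable fun x : ℝ => ENNReal.ofReal (Real.exp (c * x)) :=
    hcont.measurable.ennreal_ofReal
  set g : ℝ → ENNReal := fun x => ENNReal.ofReal (Real.exp (c * x)) with hg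
  -- conversion lemmas
  have hconv : ∀ l : ℕ, (∑ n ∈ Flevel b A l, g ((n : ℝ) / (b : ℝ) ^ l))
      = ENNReal.ofReal (Slev b A c l) := by
    intro l
    rw [Slev, ENNReal.ofReal_sum_of_nonneg (fun i _ => (Real.exp_pos _).le)]
    refine Finset.sum_congr rfl fun n _ => ?_
    rw [hg]
    simp only
    rw [mul_div_assoc]
  have hcoef : ∀ l : ℕ, ((b : ENNReal) ^ l)⁻¹ * ENNReal.ofReal (Slev b A c l)
      = ENNReal.ofReal (((b : ℝ) ^ l)⁻¹ * Slev b A c l) := by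
    intro l
    have h1 : ((b : ENNReal) ^ l) = ENNReal.ofReal ((b : ℝ) ^ l) := by
      rw [ENNReal.ofReal_pow hbR.le, ENNReal.ofReal_natCast]
    rw [h1, ← ENNReal.ofReal_inv_of_pos (by positivity),
      ← ENNReal.ofReal_mul (by positivity)]
  have hL : (∫⁻ x in Set.Ico (0 : ℝ) 1, g x ∂(kempnerMeasure b A))
      = ∑' l : ℕ, ENNReal.ofReal (((b : ℝ) ^ l)⁻¹ * Slev b A c l) := by
    by_cases h0 : 0 ∈ A
    · have hμ : kempnerMeasure b A = Measure.sum fun l : ℕ =>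
          ((b : ENNReal) ^ l)⁻¹ •
            Measure.sum fun n : {n : ℕ // Admissible b A n} =>
              Measure.dirac (((n : ℕ) : ℝ) / (b : ℝ) ^ l) := by
        rw [kempnerMeasure, if_pos h0]
      rw [hμ, Measure.restrict_sum_of_countable, lintegral_sum_measure]
      refine tsum_congr fun l => ?_
      rw [Measure.restrict_smul, lintegral_smul_measure,
        Measure.restrict_sum_of_countable, lintegral_sum_measure]
      have heval : ∀ n : {n : ℕ // Admissible b A n},
          (∫⁻ x, g x ∂(Measure.dirac (((n : ℕ) : ℝ) / (b : ℝ) ^ l)).restrict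
            (Set.Ico (0 : ℝ) 1))
          = if ((n : ℕ) : ℝ) / (b : ℝ) ^ l ∈ Set.Ico (0 : ℝ) 1
            then g (((n : ℕ) : ℝ) / (b : ℝ) ^ l) else 0 := by
        intro n
        exact setLIntegral_dirac' hmeas measurableSet_Ico
      rw [tsum_congr heval, tsum_subtype_level (Flevel b A l) g ?_ ?_, hconv, smul_eq_mul, hcoef]
      · intro n hadm
        rw [mem_Ico_iff hb, mem_Flevel]
        constructor
        · intro h
          exact ⟨h, (admissible_iff_of_mem hb h0 l n h).mp hadm⟩
        · exact And.left
      · intro n hn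
        obtain ⟨h1, h2⟩ := mem_Flevel.mp hn
        exact (admissible_iff_of_mem hb h0 l n h1).mpr h2
    · have hμ : kempnerMeasure b A = Measure.dirac 0 +
          Measure.sum fun l : ℕ =>
            ((b : ENNReal) ^ l)⁻¹ •
              Measure.sum
                (fun n : {n : ℕ // Admissible b A n ∧ l ≤ (Nat.digits b n).length} =>
                  Measure.dirac (((n : ℕ) : ℝ) / (b : ℝ) ^ l)) := by
        rw [kempnerMeasure, if_neg h0]
      rw [hμ, Measure.restrict_add, lintegral_add_measure,
        Measure.restrict_sum_of_countable, lintegral_sum_measure]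
      have hD : (∫⁻ x, g x ∂(Measure.dirac (0 : ℝ)).restrict (Set.Ico (0 : ℝ) 1)) = 1 := by
        rw [setLIntegral_dirac' hmeas measurableSet_Ico,
          if_pos (by constructor <;> norm_num : (0 : ℝ) ∈ Set.Ico (0 : ℝ) 1)]
        rw [hg]
        simp
      rw [hD]
      have hterm : ∀ l : ℕ,
          (((b : ENNReal) ^ l)⁻¹ •
            (Measure.sum
              (fun n : {n : ℕ // Admissible b A n ∧ l ≤ (Nat.digits b n).length} =>
                Measure.dirac (((n : ℕ) : ℝ) / (b : ℝ) ^ l)))).restrict (Set.Ico (0 : ℝ) 1)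
          = ((b : ENNReal) ^ l)⁻¹ •
            Measure.sum
              (fun n : {n : ℕ // Admissible b A n ∧ l ≤ (Nat.digits b n).length} =>
                (Measure.dirac (((n : ℕ) : ℝ) / (b : ℝ) ^ l)).restrict (Set.Ico (0 : ℝ) 1)) := by
        intro l
        rw [Measure.restrict_smul, Measure.restrict_sum_of_countable]
      have hTs : ∀ l : ℕ,
          (∫⁻ x, g x ∂(((b : ENNReal) ^ l)⁻¹ •
            (Measure.sum
              (fun n : {n : ℕ // Admissible b A n ∧ l ≤ (Nat.digits b n).length} =>
                Measure.dirac (((n : ℕ) : ℝ) / (b : ℝ) ^ l)))).restrict (Set.Ico (0 : ℝ) 1))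
          = ((b : ENNReal) ^ l)⁻¹ *
              ∑' n : {n : ℕ // Admissible b A n ∧ l ≤ (Nat.digits b n).length},
                if ((n : ℕ) : ℝ) / (b : ℝ) ^ l ∈ Set.Ico (0 : ℝ) 1
                then g (((n : ℕ) : ℝ) / (b : ℝ) ^ l) else 0 := by
        intro l
        rw [hterm l, lintegral_smul_measure, lintegral_sum_measure]
        congr 1
        refine tsum_congr fun n => ?_
        exact setLIntegral_dirac' hmeas measurableSet_Ico
      rw [tsum_congr hTs]
      -- evaluate level 0 and level l+1
      have hT0 : (∑' n : {n : ℕ // Admissible b A n ∧ 0 ≤ (Nat.digits b n).length},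
          if ((n : ℕ) : ℝ) / (b : ℝ) ^ 0 ∈ Set.Ico (0 : ℝ) 1
          then g (((n : ℕ) : ℝ) / (b : ℝ) ^ 0) else 0) = 0 := by
        rw [tsum_subtype_level (∅ : Finset ℕ) g ?_ ?_, Finset.sum_empty]
        · rintro n ⟨hadm, -⟩
          rw [mem_Ico_iff hb]
          constructor
          · intro h
            have : n = 0 := by simpa using h
            subst this
            exact absurd (hadm.2 rfl) h0
          · intro h
            exact absurd h (Finset.notMem_empty n)
        · intro n hn
          exact absurd hn (Finset.notMem_empty n)
      have hTsucc : ∀ l : ℕ,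
          (∑' n : {n : ℕ // Admissible b A n ∧ l + 1 ≤ (Nat.digits b n).length},
            if ((n : ℕ) : ℝ) / (b : ℝ) ^ (l + 1) ∈ Set.Ico (0 : ℝ) 1
            then g (((n : ℕ) : ℝ) / (b : ℝ) ^ (l + 1)) else 0)
          = ENNReal.ofReal (Slev b A c (l + 1)) := by
        intro l
        rw [tsum_subtype_level (Flevel b A (l + 1)) g ?_ ?_, hconv]
        · intro n hP
          rw [mem_Ico_iff hb, mem_Flevel]
          constructor
          · intro h
            exact ⟨h, (admissible_len_iff hb h0 l n h).mp hP⟩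
          · exact And.left
        · intro n hn
          obtain ⟨h1, h2⟩ := mem_Flevel.mp hn
          exact (admissible_len_iff hb h0 l n h1).mpr h2
      have hW : ∀ l : ℕ,
          ((b : ENNReal) ^ l)⁻¹ *
            (∑' n : {n : ℕ // Admissible b A n ∧ l ≤ (Nat.digits b n).length},
              if ((n : ℕ) : ℝ) / (b : ℝ) ^ l ∈ Set.Ico (0 : ℝ) 1
              then g (((n : ℕ) : ℝ) / (b : ℝ) ^ l) else 0)
          = (fun l : ℕ => if l = 0 then 0 else
              ENNReal.ofReal (((b : ℝ) ^ l)⁻¹ * Slev b A c l)) l := by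
        intro l
        cases l with
        | zero => rw [hT0]; simp
        | succ l =>
          rw [hTsucc l, hcoef]
          simp
      rw [tsum_congr hW]
      rw [tsum_eq_zero_add' ENNReal.summable, tsum_eq_zero_add' (f := fun l : ℕ =>
        ENNReal.ofReal (((b : ℝ) ^ l)⁻¹ * Slev b A c l)) ENNReal.summable]
      simp only [if_pos rfl, Nat.succ_ne_zero, if_false, if_neg (Nat.succ_ne_zero _)]
      rw [← hcoef 0]
      simp [Slev_zero]
  rw [integral_eq_lintegral_of_nonneg_ae
    (Filter.Eventually.of_forall fun x => (Real.exp_pos _).le)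
    hcont.aestronglyMeasurable]
  rw [hL, ← ENNReal.ofReal_tsum_of_nonneg
    (fun l => by have := Slev_nonneg (b := b) (A := A) c l; positivity)
    (summable_slev hb hA hcard c)]
  rw [ENNReal.toReal_ofReal
    (tsum_nonneg fun l => by have := Slev_nonneg (b := b) (A := A) c l; positivity)]

end KempnerAux

theorem kempner_exp_generating_function (b : ℕ) (hb : 1 < b) (A : Finset ℕ)
    (hA : A ⊂ Finset.range b) (hAne : A.Nonempty) (hA0 : A ≠ {0}) (t : ℝ) :
    ∫ x in Set.Ico (0 : ℝ) 1, Real.exp ((b : ℝ) * t * x) ∂(kempnerMeasure b A)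
      = 1 + (b : ℝ)⁻¹ * (∑ a ∈ A, Real.exp ((a : ℝ) * t)) *
          ∫ x in Set.Ico (0 : ℝ) 1, Real.exp (t * x) ∂(kempnerMeasure b A) := by
  have hA' : A ⊆ Finset.range b := hA.subset
  have hcard : A.card < b := by
    have := Finset.card_lt_card hA
    simpa using this
  have hbR : (0 : ℝ) < b := by exact_mod_cast (by omega : 0 < b)
  have hbne : (b : ℝ) ≠ 0 := ne_of_gt hbR
  rw [KempnerAux.key_integral hb hA' hcard ((b : ℝ) * t),
    KempnerAux.key_integral hb hA' hcard t,
    Summable.tsum_eq_zero_add (KempnerAux.summable_slev hb hA' hcard _)]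
  have h1 : ((b : ℝ) ^ (0 : ℕ))⁻¹ * KempnerAux.Slev b A ((b : ℝ) * t) 0 = 1 := by
    simp [KempnerAux.Slev_zero]
  have h2 : ∀ l : ℕ, ((b : ℝ) ^ (l + 1))⁻¹ * KempnerAux.Slev b A ((b : ℝ) * t) (l + 1)
      = (b : ℝ)⁻¹ * (∑ a ∈ A, Real.exp ((a : ℝ) * t)) *
        (((b : ℝ) ^ l)⁻¹ * KempnerAux.Slev b A t l) := by
    intro l
    rw [KempnerAux.Slev_succ hb hA']
    have e1 : (b : ℝ) * t / b = t := by field_simp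
    have e2 : (∑ a ∈ A, Real.exp ((b : ℝ) * t * a / b)) = ∑ a ∈ A, Real.exp ((a : ℝ) * t) := by
      refine Finset.sum_congr rfl fun a _ => ?_
      congr 1
      field_simp
    rw [e1, e2, pow_succ, mul_inv]
    ring
  rw [h1, tsum_congr h2, tsum_mul_left]
end

section
/- The sequence m ↦ ((b−1)/f)^m u_m (equivalently, m ↦ λ_{m+1}/(m+1) up to the constant factor u₀) is strictly decreasing and converges to zero. -/
open MeasureTheory

noncomputable def kempnerLambda (b : ℕ) (A : Finset ℕ) (hAne : A.Nonempty) (m : ℕ) : ℝ :=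
  (m : ℝ) * (((b : ℝ) - 1) / ((A.max' hAne : ℕ) : ℝ)) ^ (m - 1)
    * moment b A (m - 1) / moment b A 0

open scoped NNReal ENNReal

/-! ### Auxiliary lemmas -/

lemma digitBound {b : ℕ} (hb : 1 < b) (f : ℕ) :
    ∀ n : ℕ, (∀ d ∈ Nat.digits b n, d ≤ f) → (b - 1) * n + f ≤ f * b ^ (Nat.digits b n).length := by
  obtain ⟨c, rfl⟩ : ∃ c, b = c + 2 := ⟨b - 2, by omega⟩
  have hb1 : (c + 2) - 1 = c + 1 := by omega
  intro n
  induction n using Nat.strong_induction_on with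
  | _ n ih =>
    intro hd
    rcases Nat.eq_zero_or_pos n with h0 | h0
    · subst h0; simp
    · have hdig := Nat.digits_def' hb h0
      have hdiv : n / (c+2) < n := Nat.div_lt_self h0 hb
      have IH := ih (n / (c+2)) hdiv (fun d hdmem =>
        hd d (by rw [hdig]; exact List.mem_cons_of_mem _ hdmem))
      have hmod : n % (c+2) ≤ f := hd _ (by rw [hdig]; exact List.mem_cons_self)
      have hn : n % (c+2) + (c+2) * (n / (c+2)) = n := Nat.mod_add_div n (c+2)
      rw [hdig, List.length_cons, pow_succ, hb1] at *
      set q := n / (c+2)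
      set r := n % (c+2)
      set L := (Nat.digits (c+2) q).length
      calc (c+1) * n + f = (c+1) * r + (c+2) * ((c+1) * q) + f := by rw [← hn]; ring
        _ ≤ (c+1) * f + (c+2) * ((c+1) * q) + f := by
            have : (c+1) * r ≤ (c+1) * f := Nat.mul_le_mul_left _ hmod
            omega
        _ = (c+2) * ((c+1) * q + f) := by ring
        _ ≤ (c+2) * (f * (c+2) ^ L) := Nat.mul_le_mul_left _ IH
        _ = f * ((c+2) ^ L * (c+2)) := by ring

lemma digits_len_le_of_lt_pow {b : ℕ} (hb : 1 < b) {n l : ℕ} (h : n < b ^ l) :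
    (Nat.digits b n).length ≤ l := by
  rcases Nat.eq_zero_or_pos n with h0 | h0
  · subst h0; simp
  · by_contra hlt
    push_neg at hlt
    have h1 : b ^ (Nat.digits b n).length ≤ b * n := Nat.base_pow_length_digits_le b n hb h0.ne'
    have h2 : b ^ (l + 1) ≤ b ^ (Nat.digits b n).length := Nat.pow_le_pow_right (by omega) hlt
    have h3 : b * (b ^ l) ≤ b * n := by
      calc b * b ^ l = b ^ (l+1) := by ring
        _ ≤ b ^ (Nat.digits b n).length := h2
        _ ≤ b * n := h1
    exact absurd (Nat.le_of_mul_le_mul_left h3 (by omega)) (by omega)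

lemma fiber_card_le {b : ℕ} (A : Finset ℕ) (l k : ℕ) :
    (((Finset.range (b ^ l)).filter (fun n => Admissible b A n)).filter
      (fun n => (Nat.digits b n).length = k)).card ≤ A.card ^ k := by
  classical
  have : ((((Finset.range (b ^ l)).filter (fun n => Admissible b A n)).filter
      (fun n => (Nat.digits b n).length = k))).card ≤
      (Fintype.piFinset (fun _ : Fin k => A)).card := by
    apply Finset.card_le_card_of_injOn (fun n => (fun i : Fin k => (Nat.digits b n).getD i 0))
    · intro n hn
      simp only [Finset.mem_coe, Finset.mem_filter] at hn
      obtain ⟨⟨-, hadm⟩, hlen⟩ := hn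
      rw [Finset.mem_coe, Fintype.mem_piFinset]
      intro i
      have hi : (i : ℕ) < (Nat.digits b n).length := by rw [hlen]; exact i.2
      beta_reduce
      rw [List.getD_eq_getElem _ _ hi]
      exact hadm.1 _ (List.getElem_mem _)
    · intro n₁ h₁ n₂ h₂ heq
      simp only [Finset.mem_coe, Finset.mem_filter] at h₁ h₂
      have hlen : (Nat.digits b n₁).length = (Nat.digits b n₂).length := by
        rw [h₁.2, h₂.2]
      have : Nat.digits b n₁ = Nat.digits b n₂ := by
        apply List.ext_getElem hlen
        intro i hi₁ hi₂
        have hik : i < k := by rw [← h₁.2]; exact hi₁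
        have := congrFun heq ⟨i, hik⟩
        simp only [] at this
        rw [List.getD_eq_getElem _ _ hi₁, List.getD_eq_getElem _ _ hi₂] at this
        exact this
      have := congrArg (Nat.ofDigits b) this
      rwa [Nat.ofDigits_digits, Nat.ofDigits_digits] at this
  simpa using this

lemma count_bound {b : ℕ} (hb : 1 < b) (A : Finset ℕ) (hAne : A.Nonempty) (l : ℕ) :
    ((Finset.range (b ^ l)).filter (fun n => Admissible b A n)).card ≤ (l + 1) * A.card ^ l := by
  classical
  have hcard : ∀ k ≤ l, A.card ^ k ≤ A.card ^ l :=
    fun k hk => Nat.pow_le_pow_right (Finset.card_pos.mpr hAne) hk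
  rw [Finset.card_eq_sum_card_fiberwise (f := fun n => (Nat.digits b n).length)
      (t := Finset.range (l + 1)) ?_]
  · calc ∑ k ∈ Finset.range (l+1), (((Finset.range (b ^ l)).filter (fun n => Admissible b A n)).filter
        (fun n => (Nat.digits b n).length = k)).card
        ≤ ∑ k ∈ Finset.range (l+1), A.card ^ l := by
          apply Finset.sum_le_sum
          intro k hk
          exact le_trans (fiber_card_le A l k)
            (hcard k (by simpa using Nat.lt_succ_iff.mp (Finset.mem_range.mp hk)))
      _ = (l + 1) * A.card ^ l := by simp [mul_comm]
  · intro n hn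
    simp only [Finset.mem_coe, Finset.mem_filter, Finset.mem_range] at hn ⊢
    exact Nat.lt_succ_iff.mpr (digits_len_le_of_lt_pow hb hn.1)

noncomputable def auxM (b : ℕ) (A : Finset ℕ) : Measure ℝ :=
  Measure.sum fun l : ℕ =>
    ((b : ENNReal) ^ l)⁻¹ •
      Measure.sum fun n : {n : ℕ // Admissible b A n} =>
        Measure.dirac (((n : ℕ) : ℝ) / (b : ℝ) ^ l)

lemma kempner_le_auxM (b : ℕ) (A : Finset ℕ) :
    kempnerMeasure b A ≤ Measure.dirac 0 + auxM b A := by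
  unfold kempnerMeasure auxM
  split_ifs with h
  · exact Measure.le_add_left le_rfl
  · refine add_le_add le_rfl ?_
    refine Measure.le_iff.mpr (fun s hs => ?_)
    rw [Measure.sum_apply _ hs, Measure.sum_apply _ hs]
    refine ENNReal.tsum_le_tsum (fun l => ?_)
    rw [Measure.smul_apply, Measure.smul_apply, smul_eq_mul, smul_eq_mul]
    refine mul_le_mul_right ?_ _
    rw [Measure.sum_apply _ hs, Measure.sum_apply _ hs]
    exact ENNReal.tsum_comp_le_tsum_of_injective
      (f := fun n : {n : ℕ // Admissible b A n ∧ l ≤ (Nat.digits b n).length} =>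
        (⟨(n : ℕ), n.2.1⟩ : {n : ℕ // Admissible b A n}))
      (fun x y hxy => Subtype.ext (by simpa [Subtype.ext_iff] using hxy))
      (fun n : {n : ℕ // Admissible b A n} => Measure.dirac (((n : ℕ) : ℝ) / (b : ℝ) ^ l) s)

lemma auxM_apply (b : ℕ) (A : Finset ℕ) {s : Set ℝ} (hs : MeasurableSet s) :
    auxM b A s = ∑' l : ℕ, ((b : ENNReal) ^ l)⁻¹ *
      ∑' n : {n : ℕ // Admissible b A n},
        s.indicator (1 : ℝ → ENNReal) (((n : ℕ) : ℝ) / (b : ℝ) ^ l) := by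
  unfold auxM
  rw [Measure.sum_apply _ hs]
  refine tsum_congr (fun l => ?_)
  rw [Measure.smul_apply, smul_eq_mul, Measure.sum_apply _ hs]
  refine congrArg _ (tsum_congr (fun n => Measure.dirac_apply' _ hs))

lemma auxM_zero (b : ℕ) (A : Finset ℕ) {s : Set ℝ} (hs : MeasurableSet s)
    (h : ∀ l n : ℕ, Admissible b A n → ((n : ℝ) / (b : ℝ) ^ l) ∉ s) :
    auxM b A s = 0 := by
  rw [auxM_apply b A hs]
  simp only [ENNReal.tsum_eq_zero]
  intro l
  rw [mul_eq_zero]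
  right
  rw [ENNReal.tsum_eq_zero]
  intro n
  exact Set.indicator_of_notMem (h l n n.2) _

lemma inner_sum_le {b : ℕ} (hb : 1 < b) (A : Finset ℕ) (l : ℕ) :
    ∑' n : {n : ℕ // Admissible b A n},
        (Set.Ico (0:ℝ) 1).indicator (1 : ℝ → ENNReal) (((n : ℕ) : ℝ) / (b : ℝ) ^ l)
      ≤ (((Finset.range (b ^ l)).filter (fun n => Admissible b A n)).card : ENNReal) := by
  classical
  have hbR : (0:ℝ) < (b:ℝ) ^ l := by positivity
  set g : ℕ → ENNReal := fun n => if Admissible b A n then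
      (Set.Ico (0:ℝ) 1).indicator (1 : ℝ → ENNReal) (((n:ℕ):ℝ) / (b:ℝ)^l) else 0 with hg
  have step1 : (∑' n : {n : ℕ // Admissible b A n},
      (Set.Ico (0:ℝ) 1).indicator (1 : ℝ → ENNReal) (((n : ℕ) : ℝ) / (b : ℝ) ^ l))
      ≤ ∑' n : ℕ, g n := by
    refine le_trans (le_of_eq (tsum_congr (fun n => ?_)))
      (ENNReal.tsum_comp_le_tsum_of_injective Subtype.val_injective g)
    simp only [hg, n.2, if_true, Function.comp]
  refine le_trans step1 ?_
  rw [tsum_eq_sum (s := Finset.range (b ^ l)) ?_]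
  · calc ∑ n ∈ Finset.range (b ^ l), g n
        ≤ ∑ n ∈ Finset.range (b ^ l), (if Admissible b A n then 1 else 0) := by
          refine Finset.sum_le_sum (fun n _ => ?_)
          by_cases h : Admissible b A n
          · simp only [hg, h, if_true]
            exact Set.indicator_le_self' (fun _ _ => zero_le) _
          · simp [hg, h]
      _ = (((Finset.range (b ^ l)).filter (fun n => Admissible b A n)).card : ENNReal) := by
          rw [Finset.sum_boole]
  · intro n hn
    have hn' : b ^ l ≤ n := by simpa using hn
    have hmem : ((n:ℕ):ℝ) / (b:ℝ) ^ l ∉ Set.Ico (0:ℝ) 1 := by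
      intro hmem
      have h1 : ((n:ℕ):ℝ) / (b:ℝ) ^ l < 1 := hmem.2
      rw [div_lt_one hbR] at h1
      have h2 : (n:ℝ) < ((b^l : ℕ) : ℝ) := by push_cast; exact h1
      exact absurd (Nat.cast_lt.mp h2) (not_lt.mpr hn')
    simp [hg, Set.indicator_of_notMem hmem]

lemma tail_ne_top {b a : ℕ} (hb : 0 < b) (hab : a < b) :
    ∑' l : ℕ, ((b : ENNReal) ^ l)⁻¹ * (((l + 1) * a ^ l : ℕ) : ENNReal) ≠ ⊤ := by
  have hb0 : ((b : ℝ≥0)) ≠ 0 := by exact_mod_cast hb.ne'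
  have hcoe : ∀ l : ℕ, ((b : ENNReal) ^ l)⁻¹ * (((l + 1) * a ^ l : ℕ) : ENNReal)
      = ((((b : ℝ≥0) ^ l)⁻¹ * ((l + 1) * a ^ l : ℕ) : ℝ≥0) : ENNReal) := by
    intro l
    push_cast [ENNReal.coe_inv (pow_ne_zero l hb0), ENNReal.coe_pow]
    rfl
  rw [tsum_congr hcoe, ENNReal.tsum_coe_ne_top_iff_summable, ← NNReal.summable_coe]
  have heq : ∀ l : ℕ, ((((b : ℝ≥0) ^ l)⁻¹ * ((l + 1) * a ^ l : ℕ) : ℝ≥0) : ℝ)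
      = ((l : ℝ) + 1) * ((a : ℝ) / b) ^ l := by
    intro l
    have hbR : (0:ℝ) < (b:ℝ) ^ l := by positivity
    push_cast
    rw [div_pow]
    field_simp
  simp only [heq]
  have hr : ‖(a : ℝ) / b‖ < 1 := by
    rw [Real.norm_eq_abs, abs_of_nonneg (by positivity)]
    rw [div_lt_one (by exact_mod_cast hb)]
    exact_mod_cast hab
  have h1 : Summable (fun l : ℕ => (l : ℝ) * ((a : ℝ) / b) ^ l) := by
    simpa using summable_pow_mul_geometric_of_norm_lt_one 1 hr
  have h2 : Summable (fun l : ℕ => ((a : ℝ) / b) ^ l) :=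
    summable_geometric_of_norm_lt_one hr
  exact (h1.add h2).congr (fun l => by ring)

lemma kempner_lower {b : ℕ} (A : Finset ℕ) {f : ℕ} (hf : f ∈ A)
    (hf0 : f ≠ 0) (hfb : f < b) :
    ∀ s : Set ℝ, MeasurableSet s →
      (b : ENNReal)⁻¹ * Measure.dirac ((f : ℝ) / (b : ℝ)) s ≤ kempnerMeasure b A s := by
  have hdig : Nat.digits b f = [f] := Nat.digits_of_lt b f hf0 hfb
  have hadm : Admissible b A f := by
    constructor
    · intro d hd
      rw [hdig] at hd
      simp at hd
      subst hd; exact hf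
    · intro h0; exact absurd h0 hf0
  have hlen : 1 ≤ (Nat.digits b f).length := by rw [hdig]; simp
  have hpt : ((f : ℝ) / (b : ℝ)) = (f : ℝ) / (b : ℝ) ^ 1 := by rw [pow_one]
  intro s hs
  unfold kempnerMeasure
  split_ifs with h0A
  · calc (b : ENNReal)⁻¹ * Measure.dirac ((f : ℝ) / (b : ℝ)) s
        ≤ ((b : ENNReal) ^ 1)⁻¹ *
          (Measure.sum fun n : {n : ℕ // Admissible b A n} =>
            Measure.dirac (((n : ℕ) : ℝ) / (b : ℝ) ^ 1)) s := by
          rw [pow_one]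
          refine mul_le_mul_right ?_ _
          rw [hpt]
          exact Measure.le_iff'.mp (Measure.le_sum
            (fun n : {n : ℕ // Admissible b A n} =>
              Measure.dirac (((n : ℕ) : ℝ) / (b : ℝ) ^ 1)) ⟨f, hadm⟩) s
      _ ≤ (Measure.sum fun l : ℕ =>
            ((b : ENNReal) ^ l)⁻¹ •
              Measure.sum fun n : {n : ℕ // Admissible b A n} =>
                Measure.dirac (((n : ℕ) : ℝ) / (b : ℝ) ^ l)) s := by
          have := Measure.le_iff'.mp (Measure.le_sum (fun l : ℕ =>
            ((b : ENNReal) ^ l)⁻¹ •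
              Measure.sum fun n : {n : ℕ // Admissible b A n} =>
                Measure.dirac (((n : ℕ) : ℝ) / (b : ℝ) ^ l)) 1) s
          rw [Measure.smul_apply, smul_eq_mul] at this
          exact this
  · calc (b : ENNReal)⁻¹ * Measure.dirac ((f : ℝ) / (b : ℝ)) s
        ≤ ((b : ENNReal) ^ 1)⁻¹ *
          (Measure.sum fun n : {n : ℕ // Admissible b A n ∧ 1 ≤ (Nat.digits b n).length} =>
            Measure.dirac (((n : ℕ) : ℝ) / (b : ℝ) ^ 1)) s := by
          rw [pow_one]
          refine mul_le_mul_right ?_ _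
          rw [hpt]
          exact Measure.le_iff'.mp (Measure.le_sum
            (fun n : {n : ℕ // Admissible b A n ∧ 1 ≤ (Nat.digits b n).length} =>
              Measure.dirac (((n : ℕ) : ℝ) / (b : ℝ) ^ 1)) ⟨f, hadm, hlen⟩) s
      _ ≤ (Measure.sum fun l : ℕ =>
            ((b : ENNReal) ^ l)⁻¹ •
              Measure.sum fun n : {n : ℕ // Admissible b A n ∧ l ≤ (Nat.digits b n).length} =>
                Measure.dirac (((n : ℕ) : ℝ) / (b : ℝ) ^ l)) s := by
          have := Measure.le_iff'.mp (Measure.le_sum (fun l : ℕ =>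
            ((b : ENNReal) ^ l)⁻¹ •
              Measure.sum fun n : {n : ℕ // Admissible b A n ∧ l ≤ (Nat.digits b n).length} =>
                Measure.dirac (((n : ℕ) : ℝ) / (b : ℝ) ^ l)) 1) s
          rw [Measure.smul_apply, smul_eq_mul] at this
          exact this
      _ ≤ _ := by
          rw [Measure.add_apply]
          exact le_add_self

theorem kempner_scaled_moments_strictAnti (b : ℕ) (hb : 1 < b) (A : Finset ℕ)
    (hA : A ⊂ Finset.range b) (hAne : A.Nonempty) (hA0 : A ≠ {0}) :
    StrictAnti (fun m : ℕ =>
        (((b : ℝ) - 1) / ((A.max' hAne : ℕ) : ℝ)) ^ m * moment b A m)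
      ∧ Filter.Tendsto (fun m : ℕ =>
          (((b : ℝ) - 1) / ((A.max' hAne : ℕ) : ℝ)) ^ m * moment b A m)
          Filter.atTop (nhds 0) := by
  classical
  set f : ℕ := A.max' hAne with hfdef
  have hfA : f ∈ A := A.max'_mem hAne
  have hfb : f < b := by
    have := hA.1 hfA
    simpa [Finset.mem_range] using this
  have hf0 : f ≠ 0 := by
    intro h
    apply hA0
    apply Finset.eq_singleton_iff_unique_mem.mpr
    refine ⟨h ▸ hfA, fun a ha => ?_⟩
    have := Finset.le_max' A a ha
    omega
  have hf1 : 1 ≤ f := Nat.one_le_iff_ne_zero.mpr hf0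
  have hbR : (1:ℝ) < (b:ℝ) := by exact_mod_cast hb
  have hfR : (0:ℝ) < (f:ℝ) := by exact_mod_cast Nat.pos_of_ne_zero hf0
  set μ := kempnerMeasure b A with hμ
  set ν := μ.restrict (Set.Ico (0:ℝ) 1) with hν
  set c : ℝ := ((b:ℝ) - 1) / (f:ℝ) with hc
  have hc0 : 0 < c := by
    apply div_pos (by linarith) hfR
  have hmom : ∀ m : ℕ, moment b A m = ∫ x, x ^ m ∂ν := fun m => rfl
  -- A.card ≤ b - 1
  have hcardA : A.card ≤ b - 1 := by
    have := Finset.card_lt_card hA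
    rw [Finset.card_range] at this
    omega
  -- finiteness of ν
  haveI hfin : IsFiniteMeasure ν := by
    constructor
    rw [hν, Measure.restrict_apply_univ]
    have h1 := Measure.le_iff.mp (kempner_le_auxM b A) (Set.Ico (0:ℝ) 1) measurableSet_Ico
    have h2 : auxM b A (Set.Ico (0:ℝ) 1)
        ≤ ∑' l : ℕ, ((b : ENNReal) ^ l)⁻¹ * (((l + 1) * (b-1) ^ l : ℕ) : ENNReal) := by
      rw [auxM_apply b A measurableSet_Ico]
      refine ENNReal.tsum_le_tsum (fun l => mul_le_mul_right ?_ _)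
      refine le_trans (inner_sum_le hb A l) ?_
      have := le_trans (count_bound hb A hAne l)
        (Nat.mul_le_mul_left (l+1) (Nat.pow_le_pow_left hcardA l))
      exact_mod_cast this
    calc μ (Set.Ico (0:ℝ) 1) ≤ (Measure.dirac (0:ℝ) + auxM b A) (Set.Ico (0:ℝ) 1) := h1
      _ = Measure.dirac (0:ℝ) (Set.Ico (0:ℝ) 1) + auxM b A (Set.Ico (0:ℝ) 1) :=
          Measure.add_apply _ _ _
      _ ≤ 1 + ∑' l : ℕ, ((b : ENNReal) ^ l)⁻¹ * (((l + 1) * (b-1) ^ l : ℕ) : ENNReal) := by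
          refine add_le_add ?_ h2
          rw [Measure.dirac_apply' _ measurableSet_Ico]
          exact le_trans (Set.indicator_le_self' (fun _ _ => zero_le) _) le_rfl
      _ < ⊤ := by
          rw [ENNReal.add_lt_top]
          exact ⟨ENNReal.one_lt_top,
            lt_of_le_of_ne le_top (tail_ne_top (by omega) (by omega))⟩
  -- a.e. bound
  have hmeasS : MeasurableSet {x : ℝ | 0 ≤ c * x ∧ c * x < 1} := by
    have : {x : ℝ | 0 ≤ c * x ∧ c * x < 1} = (fun x : ℝ => c * x) ⁻¹' Set.Ico 0 1 := rfl
    rw [this]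
    exact (measurable_id.const_mul c) measurableSet_Ico
  have hae : ∀ᵐ x ∂ν, 0 ≤ c * x ∧ c * x < 1 := by
    rw [ae_iff]
    have hcompl : {x : ℝ | ¬ (0 ≤ c * x ∧ c * x < 1)} = {x : ℝ | 0 ≤ c * x ∧ c * x < 1}ᶜ := rfl
    rw [hcompl, hν, Measure.restrict_apply hmeasS.compl]
    have hle := Measure.le_iff.mp (kempner_le_auxM b A)
      ({x : ℝ | 0 ≤ c * x ∧ c * x < 1}ᶜ ∩ Set.Ico (0:ℝ) 1) (hmeasS.compl.inter measurableSet_Ico)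
    refine le_antisymm (le_trans hle ?_) zero_le
    rw [Measure.add_apply]
    have hd0 : Measure.dirac (0:ℝ) ({x : ℝ | 0 ≤ c * x ∧ c * x < 1}ᶜ ∩ Set.Ico (0:ℝ) 1) = 0 := by
      rw [Measure.dirac_apply' _ (hmeasS.compl.inter measurableSet_Ico)]
      apply Set.indicator_of_notMem
      intro hmem
      exact hmem.1 ⟨by simp, by simp⟩
    have hM0 : auxM b A ({x : ℝ | 0 ≤ c * x ∧ c * x < 1}ᶜ ∩ Set.Ico (0:ℝ) 1) = 0 := by
      apply auxM_zero b A (hmeasS.compl.inter measurableSet_Ico)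
      intro l n hadm hmem
      have hx0 : (0:ℝ) ≤ (n:ℝ) / (b:ℝ) ^ l := by positivity
      have hx1 : (n:ℝ) / (b:ℝ) ^ l < 1 := hmem.2.2
      have hbl : (0:ℝ) < (b:ℝ) ^ l := by positivity
      have hnb : n < b ^ l := by
        rw [div_lt_one hbl] at hx1
        have : (n:ℝ) < ((b ^ l : ℕ) : ℝ) := by push_cast; exact hx1
        exact_mod_cast this
      -- digit bound
      have hdlef : ∀ d ∈ Nat.digits b n, d ≤ f := fun d hd => Finset.le_max' A d (hadm.1 d hd)
      have hkey : (b - 1) * n + f ≤ f * b ^ (Nat.digits b n).length := digitBound hb f n hdlef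
      have hlel : (Nat.digits b n).length ≤ l := digits_len_le_of_lt_pow hb hnb
      have hkey2 : (b - 1) * n + f ≤ f * b ^ l :=
        le_trans hkey (Nat.mul_le_mul_left _ (Nat.pow_le_pow_right (by omega) hlel))
      have hkey3 : (b - 1) * n < f * b ^ l := by omega
      have hkeyR : ((b:ℝ) - 1) * (n:ℝ) < (f:ℝ) * (b:ℝ) ^ l := by
        have : (((b-1) * n : ℕ) : ℝ) < ((f * b ^ l : ℕ) : ℝ) := by exact_mod_cast hkey3
        push_cast [Nat.cast_sub hb.le] at this
        convert this using 2 <;> push_cast <;> ring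
      have hcx : c * ((n:ℝ) / (b:ℝ) ^ l) < 1 := by
        have h2 : ((b:ℝ)-1) * (n:ℝ)/(b:ℝ)^l < (f:ℝ) := (div_lt_iff₀ hbl).mpr hkeyR
        have h3 : c * ((n:ℝ)/(b:ℝ)^l) = (((b:ℝ)-1) * (n:ℝ)/(b:ℝ)^l)/(f:ℝ) := by
          rw [hc]; ring
        rw [h3]
        exact (div_lt_one hfR).mpr h2
      exact hmem.1 ⟨mul_nonneg hc0.le hx0, hcx⟩
    rw [hd0, hM0, add_zero]
  -- the singleton has positive measure
  have hsing : (b : ENNReal)⁻¹ ≤ ν {(f:ℝ) / (b:ℝ)} := by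
    have hpt : (f:ℝ) / (b:ℝ) ∈ Set.Ico (0:ℝ) 1 :=
      ⟨by positivity, by rw [div_lt_one (by linarith)]; exact_mod_cast hfb⟩
    rw [hν, Measure.restrict_apply (measurableSet_singleton _),
      Set.inter_eq_self_of_subset_left (Set.singleton_subset_iff.mpr hpt)]
    have := kempner_lower A hfA hf0 hfb {(f:ℝ) / (b:ℝ)} (measurableSet_singleton _)
    rw [Measure.dirac_apply' _ (measurableSet_singleton _),
      Set.indicator_of_mem (Set.mem_singleton _), Pi.one_apply, mul_one] at this
    exact this
  have hsingpos : (0 : ENNReal) < ν {(f:ℝ) / (b:ℝ)} := by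
    refine lt_of_lt_of_le ?_ hsing
    rw [ENNReal.inv_pos]
    exact ENNReal.natCast_ne_top b
  -- integrability
  have hmeasI : ∀ m : ℕ, AEStronglyMeasurable (fun x : ℝ => (c * x) ^ m) ν :=
    fun m => ((continuous_const.mul continuous_id).pow m).aestronglyMeasurable
  have hbnd : ∀ m : ℕ, ∀ᵐ x ∂ν, ‖(c * x) ^ m‖ ≤ (1:ℝ) := by
    intro m
    filter_upwards [hae] with x hx
    rw [norm_pow, Real.norm_eq_abs, abs_of_nonneg hx.1]
    exact pow_le_one₀ hx.1 hx.2.le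
  have hInt : ∀ m : ℕ, Integrable (fun x : ℝ => (c * x) ^ m) ν := fun m =>
    Integrable.mono' (integrable_const 1) (hmeasI m) (hbnd m)
  have hIeq : ∀ m : ℕ, c ^ m * moment b A m = ∫ x, (c * x) ^ m ∂ν := by
    intro m
    rw [hmom m, ← integral_const_mul]
    simp_rw [mul_pow]
  constructor
  · apply strictAnti_nat_of_succ_lt
    intro m
    show c ^ (m+1) * moment b A (m+1) < c ^ m * moment b A m
    rw [hIeq m, hIeq (m+1)]
    have key : 0 < ∫ x, ((c * x) ^ m - (c * x) ^ (m+1)) ∂ν := by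
      refine (integral_pos_iff_support_of_nonneg_ae
        (f := fun x => (c * x) ^ m - (c * x) ^ (m+1)) ?_ ?_).mpr ?_
      · filter_upwards [hae] with x hx
        simp only [Pi.zero_apply]
        rw [sub_nonneg, pow_succ]
        exact mul_le_of_le_one_right (pow_nonneg hx.1 m) hx.2.le
      · exact (hInt m).sub (hInt (m+1))
      · refine lt_of_lt_of_le hsingpos (measure_mono ?_)
        intro x hx
        rw [Set.mem_singleton_iff] at hx
        subst hx
        have hcf : c * ((f:ℝ) / (b:ℝ)) = ((b:ℝ) - 1) / (b:ℝ) := by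
          rw [hc]; field_simp
        simp only [Function.mem_support]
        rw [hcf]
        have h01 : (0:ℝ) < ((b:ℝ) - 1) / (b:ℝ) := by
          apply div_pos (by linarith) (by linarith)
        have h11 : ((b:ℝ) - 1) / (b:ℝ) < 1 := by
          rw [div_lt_one (by linarith)]; linarith
        have := pow_lt_pow_right_of_lt_one₀ h01 h11 (Nat.lt_succ_self m)
        intro hcontra
        rw [sub_eq_zero] at hcontra
        exact absurd hcontra.symm (ne_of_lt this)
    rw [integral_sub (hInt m) (hInt (m+1))] at key
    linarith
  · have hlim : ∀ᵐ x ∂ν, Filter.Tendsto (fun m : ℕ => (c * x) ^ m) Filter.atTop (nhds 0) := by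
      filter_upwards [hae] with x hx
      exact tendsto_pow_atTop_nhds_zero_of_lt_one hx.1 hx.2
    have := tendsto_integral_of_dominated_convergence (fun _ => (1:ℝ))
      hmeasI (integrable_const 1) hbnd hlim
    rw [integral_zero] at this
    refine this.congr (fun m => ?_)
    exact (hIeq m).symm
end

section
/- Geometric convergence: if l ≥ 2, or if l = 1 and (1 ∉ A or b−1 ∉ A), then there exist a constant C > 0 and a ratio 0 < r < 1 such that for all m ≥ 1 the terms of the alternating series satisfy u_m β_{l,m+1} ≤ C r^m, where β_{l,k} = Σ_{n admissible, l(n)=l} n^{−k}. -/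
open MeasureTheory

lemma tsum_sub_le_card {Q : ℕ → Prop} (h : ℕ → ENNReal) (F : Finset ℕ)
    (h1 : ∀ n, h n ≤ 1) (h0 : ∀ n, Q n → h n ≠ 0 → n ∈ F) :
    ∑' (n : {n : ℕ // Q n}), h ↑n ≤ (F.card : ENNReal) := by
  rw [ENNReal.tsum_eq_iSup_sum]
  apply iSup_le
  intro s
  calc ∑ x ∈ s, h ↑x ≤ ∑ x ∈ s.filter (fun x => x.1 ∈ F), 1 := by
        rw [← Finset.sum_filter_add_sum_filter_not s (fun x => x.1 ∈ F)]
        have : ∑ x ∈ s.filter (fun x => ¬ x.1 ∈ F), h ↑x = 0 := by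
          apply Finset.sum_eq_zero
          intro x hx
          by_contra hne
          exact (Finset.mem_filter.mp hx).2 (h0 _ x.2 hne)
        rw [this, add_zero]
        exact Finset.sum_le_sum (fun x _ => h1 _)
    _ = ((s.filter (fun x => x.1 ∈ F)).card : ENNReal) := by simp
    _ ≤ (F.card : ENNReal) := by
        apply Nat.cast_le.mpr
        apply Finset.card_le_card_of_injOn (fun x => x.1)
        · intro x hx; exact (Finset.mem_filter.mp hx).2
        · intro x _ y _ hxy; exact Subtype.ext hxy

lemma count_exact (b : ℕ) (hb : 1 < b) (A : Finset ℕ) :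
    ∀ l : ℕ, ((Finset.range (b ^ l)).filter
      (fun n => (∀ d ∈ Nat.digits b n, d ∈ A) ∧ (Nat.digits b n).length = l)).card
      ≤ A.card ^ l := by
  intro l
  induction l with
  | zero =>
    calc _ ≤ (Finset.range (b ^ 0)).card := Finset.card_filter_le _ _
    _ = 1 := by simp
  | succ l ih =>
    calc _ ≤ (A ×ˢ ((Finset.range (b ^ l)).filter
        (fun n => (∀ d ∈ Nat.digits b n, d ∈ A) ∧ (Nat.digits b n).length = l))).card := by
          apply Finset.card_le_card_of_injOn (fun n => (n % b, n / b))
          · intro n hn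
            have h := Finset.mem_filter.mp hn
            have hrange := Finset.mem_range.mp h.1
            have hdig := h.2.1
            have hlen := h.2.2
            have hn0 : 0 < n := by
              rcases Nat.eq_zero_or_pos n with rfl | h'
              · simp at hlen
              · exact h'
            have hd : Nat.digits b n = n % b :: Nat.digits b (n / b) :=
              Nat.digits_def' hb hn0
            rw [Finset.mem_coe, Finset.mem_product, Finset.mem_filter, Finset.mem_range]
            refine ⟨hdig _ (by rw [hd]; exact List.mem_cons_self), ?_, ?_, ?_⟩
            · exact (Nat.div_lt_iff_lt_mul (by omega)).mpr (by rw [← pow_succ]; exact hrange)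
            · intro d hdm; exact hdig d (by rw [hd]; exact List.mem_cons_of_mem _ hdm)
            · show (Nat.digits b (n / b)).length = l
              have hlen2 := hlen; rw [hd] at hlen2; simp at hlen2; omega
          · intro x _ y _ hxy
            have h1 : x % b = y % b := congrArg Prod.fst hxy
            have h2 : x / b = y / b := congrArg Prod.snd hxy
            calc x = b * (x / b) + x % b := (Nat.div_add_mod x b).symm
            _ = b * (y / b) + y % b := by rw [h1, h2]
            _ = y := Nat.div_add_mod y b
    _ ≤ A.card ^ (l + 1) := by
          rw [Finset.card_product]
          calc A.card * _ ≤ A.card * A.card ^ l := Nat.mul_le_mul_left _ ih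
          _ = A.card ^ (l + 1) := by ring

lemma count_all (b : ℕ) (hb : 1 < b) (A : Finset ℕ) (h0A : 0 ∈ A) :
    ∀ l : ℕ, ((Finset.range (b ^ l)).filter
      (fun n => ∀ d ∈ Nat.digits b n, d ∈ A)).card ≤ A.card ^ l := by
  intro l
  induction l with
  | zero =>
    calc _ ≤ (Finset.range (b ^ 0)).card := Finset.card_filter_le _ _
    _ = 1 := by simp
  | succ l ih =>
    calc _ ≤ (A ×ˢ ((Finset.range (b ^ l)).filter
        (fun n => ∀ d ∈ Nat.digits b n, d ∈ A))).card := by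
          apply Finset.card_le_card_of_injOn (fun n => (n % b, n / b))
          · intro n hn
            have h := Finset.mem_filter.mp hn
            have hrange := Finset.mem_range.mp h.1
            have hdig := h.2
            rw [Finset.mem_coe, Finset.mem_product, Finset.mem_filter, Finset.mem_range]
            rcases Nat.eq_zero_or_pos n with rfl | hn0
            · simpa using ⟨h0A, pow_pos (by omega : 0 < b) l⟩
            have hd : Nat.digits b n = n % b :: Nat.digits b (n / b) :=
              Nat.digits_def' hb hn0
            refine ⟨hdig _ (by rw [hd]; exact List.mem_cons_self), ?_, ?_⟩
            · exact (Nat.div_lt_iff_lt_mul (by omega)).mpr (by rw [← pow_succ]; exact hrange)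
            · intro d hdm; exact hdig d (by rw [hd]; exact List.mem_cons_of_mem _ hdm)
          · intro x _ y _ hxy
            have h1 : x % b = y % b := congrArg Prod.fst hxy
            have h2 : x / b = y / b := congrArg Prod.snd hxy
            calc x = b * (x / b) + x % b := (Nat.div_add_mod x b).symm
            _ = b * (y / b) + y % b := by rw [h1, h2]
            _ = y := Nat.div_add_mod y b
    _ ≤ A.card ^ (l + 1) := by
          rw [Finset.card_product]
          calc A.card * _ ≤ A.card * A.card ^ l := Nat.mul_le_mul_left _ ih
          _ = A.card ^ (l + 1) := by ring

lemma atom_le (b : ℕ) (hb : 1 < b) (A : Finset ℕ) (f : ℕ) (hf : ∀ a ∈ A, a ≤ f) :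
    ∀ j n : ℕ, (∀ d ∈ Nat.digits b n, d ∈ A) → n < b ^ j → (b - 1) * n + f ≤ f * b ^ j := by
  intro j
  induction j with
  | zero =>
    intro n _ hn
    simp only [pow_zero] at hn ⊢
    have : n = 0 := by omega
    subst this; simp
  | succ j ih =>
    intro n hdig hn
    rcases Nat.eq_zero_or_pos n with rfl | hn0
    · have h1 : 1 ≤ b ^ (j+1) := Nat.one_le_pow _ _ (by omega)
      calc (b-1) * 0 + f = f * 1 := by ring
      _ ≤ f * b ^ (j+1) := Nat.mul_le_mul_left _ h1
    have hd : Nat.digits b n = n % b :: Nat.digits b (n / b) := Nat.digits_def' hb hn0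
    have hr : n % b ≤ f := hf _ (hdig _ (by rw [hd]; exact List.mem_cons_self))
    have hq : (b - 1) * (n / b) + f ≤ f * b ^ j := by
      apply ih
      · intro d hdm; exact hdig d (by rw [hd]; exact List.mem_cons_of_mem _ hdm)
      · exact (Nat.div_lt_iff_lt_mul (by omega)).mpr (by rw [← pow_succ]; exact hn)
    have hmod : n = b * (n / b) + n % b := (Nat.div_add_mod n b).symm
    set c := b - 1 with hc
    have hb1 : c + 1 = b := by omega
    set q := n / b
    set r := n % b
    calc c * n + f = b * (c * q) + (c * r + f) := by rw [hmod]; ring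
    _ ≤ b * (c * q) + (c * f + f) := by
          have := Nat.mul_le_mul_left c hr; omega
    _ = b * (c * q) + b * f := by rw [← hb1]; ring
    _ = b * (c * q + f) := by ring
    _ ≤ b * (f * b ^ j) := Nat.mul_le_mul_left _ hq
    _ = f * b ^ (j+1) := by ring

lemma indicator_Ico_le_one (x : ℝ) : (Set.Ico (0:ℝ) 1).indicator (1 : ℝ → ENNReal) x ≤ 1 := by
  classical
  by_cases h : x ∈ Set.Ico (0:ℝ) 1 <;> simp [Set.indicator_apply, h]

lemma mem_of_indicator_ne_zero {x : ℝ} (h : (Set.Ico (0:ℝ) 1).indicator (1 : ℝ → ENNReal) x ≠ 0) :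
    x ∈ Set.Ico (0:ℝ) 1 := by
  by_contra hx
  exact h (Set.indicator_of_notMem hx _)

lemma kempner_finite (b : ℕ) (hb : 1 < b) (A : Finset ℕ) (hA : A ⊂ Finset.range b) :
    kempnerMeasure b A (Set.Ico (0:ℝ) 1) ≠ ⊤ := by
  have hb0 : (0:ℕ) < b := by omega
  have hN : A.card < b := by
    have := Finset.card_lt_card hA
    simpa using this
  -- geometric sum is finite
  have hr1 : ((A.card : ENNReal)) / (b : ENNReal) < 1 := by
    rw [ENNReal.div_lt_iff (Or.inl (by exact_mod_cast hb0.ne')) (Or.inl (ENNReal.natCast_ne_top b))]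
    rw [one_mul]
    exact_mod_cast hN
  have hgeo : (∑' l : ℕ, ((A.card : ENNReal) / b) ^ l) ≠ ⊤ := by
    rw [ENNReal.tsum_geometric]
    exact ENNReal.inv_ne_top.mpr (by
      rw [Ne, tsub_eq_zero_iff_le]
      exact not_le.mpr hr1)
  have hterm : ∀ l : ℕ, (((b : ENNReal) ^ l)⁻¹ * ((A.card ^ l : ℕ) : ENNReal))
      = ((A.card : ENNReal) / b) ^ l := by
    intro l
    rw [div_eq_mul_inv, mul_pow, ← ENNReal.inv_pow]
    push_cast
    ring
  have hs : MeasurableSet (Set.Ico (0:ℝ) 1) := measurableSet_Ico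
  unfold kempnerMeasure
  by_cases h0 : 0 ∈ A
  · rw [if_pos h0, Measure.sum_apply _ hs]
    apply ne_top_of_le_ne_top hgeo
    apply ENNReal.tsum_le_tsum
    intro l
    rw [Measure.smul_apply, smul_eq_mul, Measure.sum_apply _ hs, ← hterm l]
    apply mul_le_mul_right
    have hcard := count_all b hb A h0 l
    calc ∑' (n : {n : ℕ // Admissible b A n}),
          Measure.dirac (((n : ℕ) : ℝ) / (b : ℝ) ^ l) (Set.Ico (0:ℝ) 1)
        = ∑' (n : {n : ℕ // Admissible b A n}),
          (Set.Ico (0:ℝ) 1).indicator 1 (((n : ℕ) : ℝ) / (b : ℝ) ^ l) := by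
          congr 1; funext n; exact Measure.dirac_apply _ _
      _ ≤ (((Finset.range (b ^ l)).filter
            (fun n => ∀ d ∈ Nat.digits b n, d ∈ A)).card : ENNReal) := by
          apply tsum_sub_le_card (fun k : ℕ => (Set.Ico (0:ℝ) 1).indicator 1 ((k:ℝ) / (b:ℝ) ^ l))
          · intro n; exact indicator_Ico_le_one _
          · intro n hQ hne
            have hmem := mem_of_indicator_ne_zero hne
            rw [Finset.mem_filter, Finset.mem_range]
            refine ⟨?_, hQ.1⟩
            have h1 := hmem.2
            have hbl : (0:ℝ) < (b:ℝ) ^ l := by positivity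
            have h2 : (n:ℝ) < (b:ℝ) ^ l := (div_lt_one hbl).mp h1
            exact_mod_cast h2
      _ ≤ ((A.card ^ l : ℕ) : ENNReal) := by exact_mod_cast hcard
  · rw [if_neg h0, Measure.add_apply, Measure.sum_apply _ hs]
    apply ENNReal.add_ne_top.mpr
    constructor
    · exact ne_top_of_le_ne_top ENNReal.one_ne_top (by
        rw [Measure.dirac_apply]
        exact indicator_Ico_le_one 0)
    apply ne_top_of_le_ne_top hgeo
    apply ENNReal.tsum_le_tsum
    intro l
    rw [Measure.smul_apply, smul_eq_mul, Measure.sum_apply _ hs, ← hterm l]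
    apply mul_le_mul_right
    have hcard := count_exact b hb A l
    calc ∑' (n : {n : ℕ // Admissible b A n ∧ l ≤ (Nat.digits b n).length}),
          Measure.dirac (((n : ℕ) : ℝ) / (b : ℝ) ^ l) (Set.Ico (0:ℝ) 1)
        = ∑' (n : {n : ℕ // Admissible b A n ∧ l ≤ (Nat.digits b n).length}),
          (Set.Ico (0:ℝ) 1).indicator 1 (((n : ℕ) : ℝ) / (b : ℝ) ^ l) := by
          congr 1; funext n; exact Measure.dirac_apply _ _
      _ ≤ (((Finset.range (b ^ l)).filter
            (fun n => (∀ d ∈ Nat.digits b n, d ∈ A) ∧ (Nat.digits b n).length = l)).card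
            : ENNReal) := by
          apply tsum_sub_le_card (fun k : ℕ => (Set.Ico (0:ℝ) 1).indicator 1 ((k:ℝ) / (b:ℝ) ^ l))
          · intro n; exact indicator_Ico_le_one _
          · intro n hQ hne
            have hmem := mem_of_indicator_ne_zero hne
            have hbl : (0:ℝ) < (b:ℝ) ^ l := by positivity
            have h2 : (n:ℝ) < (b:ℝ) ^ l := (div_lt_one hbl).mp hmem.2
            have hnl : n < b ^ l := by exact_mod_cast h2
            rw [Finset.mem_filter, Finset.mem_range]
            refine ⟨hnl, hQ.1.1, ?_⟩
            -- length = l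
            rcases Nat.eq_zero_or_pos n with rfl | hn0
            · simp only [Nat.digits_zero, List.length_nil] at hQ ⊢
              omega
            have hlen_le : (Nat.digits b n).length ≤ l := by
              by_contra hcon
              push_neg at hcon
              have h3 : b ^ ((Nat.digits b n).length) ≤ b * n :=
                Nat.base_pow_length_digits_le b n hb (by omega)
              have h4 : b ^ (l + 1) ≤ b ^ ((Nat.digits b n).length) :=
                Nat.pow_le_pow_right (by omega) (by omega)
              rw [pow_succ] at h4
              have : b ^ l ≤ n := by
                have h5 : b ^ l * b ≤ b * n := le_trans h4 h3
                rw [mul_comm (b ^ l) b] at h5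
                exact Nat.le_of_mul_le_mul_left h5 (by omega)
              omega
            omega
      _ ≤ ((A.card ^ l : ℕ) : ENNReal) := by exact_mod_cast hcard

lemma kempner_null (b : ℕ) (hb : 1 < b) (A : Finset ℕ) (f : ℕ) (hf : ∀ a ∈ A, a ≤ f) :
    kempnerMeasure b A (Set.Ioo ((f:ℝ)/((b:ℝ)-1)) 1) = 0 := by
  have hb1R : (0:ℝ) < (b:ℝ) - 1 := by
    have : (1:ℝ) < (b:ℝ) := by exact_mod_cast hb
    linarith
  set ρ : ℝ := (f:ℝ)/((b:ℝ)-1) with hρ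
  have hρ0 : 0 ≤ ρ := by positivity
  have key : ∀ (l n : ℕ), (∀ d ∈ Nat.digits b n, d ∈ A) →
      ((n:ℝ) / (b:ℝ) ^ l) ∉ Set.Ioo ρ 1 := by
    intro l n hdig
    have hbl : (0:ℝ) < (b:ℝ) ^ l := by positivity
    by_cases hn : n < b ^ l
    · intro hmem
      have h1 := atom_le b hb A f hf l n hdig hn
      have h2 : (b - 1) * n ≤ f * b ^ l := by omega
      have h2R : ((b:ℝ) - 1) * (n:ℝ) ≤ (f:ℝ) * (b:ℝ) ^ l := by
        have hcast : (((b-1) * n : ℕ) : ℝ) ≤ ((f * b ^ l : ℕ) : ℝ) := by exact_mod_cast h2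
        push_cast [Nat.cast_sub (by omega : 1 ≤ b)] at hcast
        convert hcast using 2 <;> push_cast <;> ring
      have : (n:ℝ) / (b:ℝ) ^ l ≤ ρ := by
        rw [hρ, div_le_div_iff₀ hbl hb1R]
        nlinarith
      exact absurd hmem.1 (not_lt.mpr this)
    · intro hmem
      have : (1:ℝ) ≤ (n:ℝ) / (b:ℝ) ^ l := by
        rw [le_div_iff₀ hbl, one_mul]
        exact_mod_cast (by push_cast; exact_mod_cast Nat.le_of_not_lt hn : ((b^l : ℕ):ℝ) ≤ (n:ℝ))
      exact absurd hmem.2 (not_lt.mpr this)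
  have ms : MeasurableSet (Set.Ioo ρ 1) := measurableSet_Ioo
  unfold kempnerMeasure
  by_cases h0 : 0 ∈ A
  · rw [if_pos h0, Measure.sum_apply _ ms]
    apply ENNReal.tsum_eq_zero.mpr
    intro l
    rw [Measure.smul_apply, smul_eq_mul, Measure.sum_apply _ ms]
    have : ∀ (n : {n : ℕ // Admissible b A n}),
        Measure.dirac (((n : ℕ) : ℝ) / (b : ℝ) ^ l) (Set.Ioo ρ 1) = 0 := by
      intro n
      rw [Measure.dirac_apply]
      exact Set.indicator_of_notMem (key l n n.2.1) _
    simp [this]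
  · rw [if_neg h0, Measure.add_apply, Measure.sum_apply _ ms]
    have hd0 : Measure.dirac (0:ℝ) (Set.Ioo ρ 1) = 0 := by
      rw [Measure.dirac_apply]
      exact Set.indicator_of_notMem (by
        intro hmem
        exact absurd hmem.1 (not_lt.mpr hρ0)) _
    rw [hd0, zero_add]
    apply ENNReal.tsum_eq_zero.mpr
    intro l
    rw [Measure.smul_apply, smul_eq_mul, Measure.sum_apply _ ms]
    have : ∀ (n : {n : ℕ // Admissible b A n ∧ l ≤ (Nat.digits b n).length}),
        Measure.dirac (((n : ℕ) : ℝ) / (b : ℝ) ^ l) (Set.Ioo ρ 1) = 0 := by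
      intro n
      rw [Measure.dirac_apply]
      exact Set.indicator_of_notMem (key l n n.2.1.1) _
    simp [this]

lemma moment_le (b : ℕ) (hb : 1 < b) (A : Finset ℕ) (hA : A ⊂ Finset.range b) (m : ℕ)
    (ρ : ℝ) (hρ0 : 0 ≤ ρ) (hnull : kempnerMeasure b A (Set.Ioo ρ 1) = 0) :
    moment b A m ≤ ((kempnerMeasure b A (Set.Ico (0:ℝ) 1)).toReal + 1) * ρ ^ m := by
  set μ := kempnerMeasure b A with hμ
  set ν := μ.restrict (Set.Ico (0:ℝ) 1) with hν
  haveI : IsFiniteMeasure ν :=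
    ⟨by rw [hν, Measure.restrict_apply_univ]; exact (kempner_finite b hb A hA).lt_top⟩
  have hmem : ∀ᵐ x ∂ν, x ∈ Set.Ico (0:ℝ) 1 := ae_restrict_mem measurableSet_Ico
  have hnm : ∀ᵐ x ∂ν, x ∉ Set.Ioo ρ 1 :=
    measure_eq_zero_iff_ae_notMem.mp
      (le_antisymm ((Measure.restrict_apply_le _ _).trans hnull.le) zero_le)
  have hbd : ∀ᵐ x ∂ν, x ^ m ≤ ρ ^ m := by
    filter_upwards [hmem, hnm] with x h1 h2
    apply pow_le_pow_left₀ h1.1 _ m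
    by_contra hx
    push_neg at hx
    exact h2 ⟨hx, h1.2⟩
  have hint : Integrable (fun x => x ^ m) ν := by
    apply Integrable.mono' (integrable_const (1:ℝ)) ((continuous_pow m).aestronglyMeasurable)
    filter_upwards [hmem] with x hx
    rw [Real.norm_eq_abs, abs_pow, abs_of_nonneg hx.1]
    exact pow_le_one₀ hx.1 hx.2.le
  have h1 : moment b A m ≤ ∫ _x, ρ ^ m ∂ν :=
    integral_mono_ae hint (integrable_const _) hbd
  have h2 : ∫ _x, ρ ^ m ∂ν = (μ (Set.Ico (0:ℝ) 1)).toReal * ρ ^ m := by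
    rw [integral_const, hν, measureReal_def, Measure.restrict_apply_univ, smul_eq_mul]
  refine h1.trans (h2.le.trans ?_)
  apply mul_le_mul_of_nonneg_right _ (pow_nonneg hρ0 m)
  linarith

lemma beta_le (b : ℕ) (A : Finset ℕ) (l m : ℕ) (K : ℝ) (hK : 1 ≤ K)
    (hKn : ∀ n ∈ (Finset.range (b ^ l)).filter
      (fun n => Admissible b A n ∧ (Nat.digits b n).length = l), K ≤ (n:ℝ)) :
    ∑ n ∈ (Finset.range (b ^ l)).filter
        (fun n => Admissible b A n ∧ (Nat.digits b n).length = l),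
      ((n : ℝ) ^ (m + 1))⁻¹ ≤ ((b:ℝ) ^ l) * (K⁻¹) ^ m := by
  have hK0 : (0:ℝ) < K := lt_of_lt_of_le one_pos hK
  calc ∑ n ∈ (Finset.range (b ^ l)).filter
        (fun n => Admissible b A n ∧ (Nat.digits b n).length = l),
      ((n : ℝ) ^ (m + 1))⁻¹
      ≤ ∑ _n ∈ (Finset.range (b ^ l)).filter
        (fun n => Admissible b A n ∧ (Nat.digits b n).length = l), (K⁻¹) ^ m := by
        apply Finset.sum_le_sum
        intro n hn
        have hKle : K ≤ (n:ℝ) := hKn n hn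
        have hn0 : (0:ℝ) < (n:ℝ) := lt_of_lt_of_le hK0 hKle
        have h1 : K ^ m ≤ (n:ℝ) ^ (m + 1) := by
          calc K ^ m = K ^ m * 1 := (mul_one _).symm
          _ ≤ (n:ℝ) ^ m * (n:ℝ) := by
              apply mul_le_mul (pow_le_pow_left₀ hK0.le hKle m) (le_trans hK hKle)
                zero_le_one (pow_nonneg hn0.le m)
          _ = (n:ℝ) ^ (m + 1) := (pow_succ _ _).symm
        have h2 : ((n : ℝ) ^ (m + 1))⁻¹ ≤ (K ^ m)⁻¹ := inv_anti₀ (pow_pos hK0 m) h1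
        rw [inv_pow]
        exact h2
    _ = (((Finset.range (b ^ l)).filter
        (fun n => Admissible b A n ∧ (Nat.digits b n).length = l)).card : ℝ) * (K⁻¹) ^ m := by
        rw [Finset.sum_const, nsmul_eq_mul]
    _ ≤ ((b:ℝ) ^ l) * (K⁻¹) ^ m := by
        apply mul_le_mul_of_nonneg_right _ (by positivity)
        have := Finset.card_filter_le (Finset.range (b ^ l))
          (fun n => Admissible b A n ∧ (Nat.digits b n).length = l)
        rw [Finset.card_range] at this
        exact_mod_cast this

theorem kempner_geometric_convergence (b : ℕ) (hb : 1 < b) (A : Finset ℕ)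
    (hA : A ⊂ Finset.range b) (hAne : A.Nonempty) (hA0 : A ≠ {0})
    (l : ℕ) (hl : 1 ≤ l)
    (hcase : 2 ≤ l ∨ (l = 1 ∧ (1 ∉ A ∨ b - 1 ∉ A))) :
    ∃ C > (0 : ℝ), ∃ r : ℝ, 0 < r ∧ r < 1 ∧
      ∀ m : ℕ, 1 ≤ m →
        moment b A m *
            ∑ n ∈ (Finset.range (b ^ l)).filter
                (fun n => Admissible b A n ∧ (Nat.digits b n).length = l),
              ((n : ℝ) ^ (m + 1))⁻¹
          ≤ C * r ^ m := by
  have hbR : (1:ℝ) < (b:ℝ) := by exact_mod_cast hb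
  set M : ℝ := (kempnerMeasure b A (Set.Ico (0:ℝ) 1)).toReal with hM
  have hM0 : 0 ≤ M := ENNReal.toReal_nonneg
  have hCpos : (0:ℝ) < (M + 1) * (b:ℝ) ^ l := by positivity
  have hβ0 : ∀ m : ℕ, 0 ≤ ∑ n ∈ (Finset.range (b ^ l)).filter
      (fun n => Admissible b A n ∧ (Nat.digits b n).length = l), ((n : ℝ) ^ (m + 1))⁻¹ := by
    intro m
    apply Finset.sum_nonneg
    intro n _
    positivity
  have hmom1 : ∀ m : ℕ, moment b A m ≤ M + 1 := by
    intro m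
    have := moment_le b hb A hA m 1 zero_le_one (by simp)
    simpa using this
  -- helper: members of the filter are nonzero and equal to their digit list info
  have hmemF : ∀ n ∈ (Finset.range (b ^ l)).filter
      (fun n => Admissible b A n ∧ (Nat.digits b n).length = l),
      n ≠ 0 ∧ Admissible b A n ∧ (Nat.digits b n).length = l := by
    intro n hn
    have h := Finset.mem_filter.mp hn
    refine ⟨?_, h.2⟩
    intro hn0
    subst hn0
    have := h.2.2
    simp at this
    omega
  rcases hcase with h2l | ⟨hl1, hcases⟩
  · -- case l ≥ 2
    refine ⟨(M + 1) * (b:ℝ) ^ l, hCpos, ((b:ℝ) ^ (l - 1))⁻¹, by positivity, ?_, ?_⟩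
    · rw [inv_lt_one_iff₀]
      right
      exact one_lt_pow₀ hbR (by omega)
    intro m _
    have hβ : ∑ n ∈ (Finset.range (b ^ l)).filter
        (fun n => Admissible b A n ∧ (Nat.digits b n).length = l),
        ((n : ℝ) ^ (m + 1))⁻¹ ≤ ((b:ℝ) ^ l) * (((b:ℝ) ^ (l - 1))⁻¹) ^ m := by
      apply beta_le b A l m ((b:ℝ) ^ (l-1)) (one_le_pow₀ hbR.le)
      · intro n hn
        obtain ⟨hn0, hadm, hlen⟩ := hmemF n hn
        have h3 : b ^ l ≤ b * n := by
          have := Nat.base_pow_length_digits_le b n hb hn0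
          rwa [hlen] at this
        have h4 : b ^ (l - 1) ≤ n := by
          have hst : b * b ^ (l - 1) = b ^ l := by
            rw [← pow_succ']
            congr 1
            omega
          have : b * b ^ (l-1) ≤ b * n := by rw [hst]; exact h3
          exact Nat.le_of_mul_le_mul_left this (by omega)
        exact_mod_cast Nat.cast_le.mpr h4
    calc moment b A m * _ ≤ (M + 1) * (((b:ℝ) ^ l) * (((b:ℝ) ^ (l - 1))⁻¹) ^ m) :=
          mul_le_mul (hmom1 m) hβ (hβ0 m) (by linarith)
    _ = (M + 1) * (b:ℝ) ^ l * (((b:ℝ) ^ (l - 1))⁻¹) ^ m := by ring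
  rcases hcases with h1A | hbA
  · -- case l = 1, 1 ∉ A
    subst hl1
    refine ⟨(M + 1) * (b:ℝ) ^ 1, hCpos, (2:ℝ)⁻¹, by norm_num, by norm_num, ?_⟩
    intro m _
    have hβ : ∑ n ∈ (Finset.range (b ^ 1)).filter
        (fun n => Admissible b A n ∧ (Nat.digits b n).length = 1),
        ((n : ℝ) ^ (m + 1))⁻¹ ≤ ((b:ℝ) ^ 1) * ((2:ℝ)⁻¹) ^ m := by
      apply beta_le b A 1 m 2 one_le_two
      intro n hn
      obtain ⟨hn0, hadm, hlen⟩ := hmemF n hn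
      have hnb : n < b := by
        have := Finset.mem_range.mp (Finset.mem_filter.mp hn).1
        simpa using this
      have hdig : Nat.digits b n = [n] := Nat.digits_of_lt b n hn0 hnb
      have hnA : n ∈ A := by
        have := hadm.1 n (by rw [hdig]; exact List.mem_cons_self)
        exact this
      have : n ≠ 1 := fun h => h1A (h ▸ hnA)
      have : 2 ≤ n := by omega
      exact_mod_cast Nat.cast_le.mpr this
    calc moment b A m * _ ≤ (M + 1) * (((b:ℝ) ^ 1) * ((2:ℝ)⁻¹) ^ m) :=
          mul_le_mul (hmom1 m) hβ (hβ0 m) (by linarith)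
    _ = (M + 1) * (b:ℝ) ^ 1 * ((2:ℝ)⁻¹) ^ m := by ring
  · -- case l = 1, b - 1 ∉ A
    subst hl1
    set f : ℕ := A.max' hAne with hf
    have hfA : ∀ a ∈ A, a ≤ f := fun a ha => A.le_max' a ha
    have hfmem : f ∈ A := A.max'_mem hAne
    have hf1 : 1 ≤ f := by
      by_contra hcon
      push_neg at hcon
      interval_cases f
      apply hA0
      apply Finset.Subset.antisymm
      · intro x hx
        have := hfA x hx
        simp [Nat.le_zero.mp this]
      · intro x hx
        rw [Finset.mem_singleton] at hx
        subst hx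
        exact hfmem
    have hfb : f < b - 1 := by
      have : f < b := by
        have := hA.1 hfmem
        simpa using this
      have : f ≠ b - 1 := fun h => hbA (h ▸ hfmem)
      omega
    set ρ : ℝ := (f:ℝ)/((b:ℝ)-1) with hρ
    have hb1R : (0:ℝ) < (b:ℝ) - 1 := by linarith
    have hρ0 : 0 < ρ := by
      apply div_pos _ hb1R
      exact_mod_cast hf1
    have hρ1 : ρ < 1 := by
      rw [hρ, div_lt_one hb1R]
      have : ((f:ℕ):ℝ) < ((b-1:ℕ):ℝ) := by exact_mod_cast hfb
      rwa [Nat.cast_sub (by omega), Nat.cast_one] at this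
    refine ⟨(M + 1) * (b:ℝ) ^ 1, hCpos, ρ, hρ0, hρ1, ?_⟩
    intro m _
    have hmom : moment b A m ≤ (M + 1) * ρ ^ m :=
      moment_le b hb A hA m ρ hρ0.le (kempner_null b hb A f hfA)
    have hβ : ∑ n ∈ (Finset.range (b ^ 1)).filter
        (fun n => Admissible b A n ∧ (Nat.digits b n).length = 1),
        ((n : ℝ) ^ (m + 1))⁻¹ ≤ ((b:ℝ) ^ 1) * ((1:ℝ)⁻¹) ^ m := by
      apply beta_le b A 1 m 1 le_rfl
      intro n hn
      obtain ⟨hn0, _, _⟩ := hmemF n hn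
      exact_mod_cast Nat.one_le_cast.mpr (by omega)
    have hβ' : ∑ n ∈ (Finset.range (b ^ 1)).filter
        (fun n => Admissible b A n ∧ (Nat.digits b n).length = 1),
        ((n : ℝ) ^ (m + 1))⁻¹ ≤ (b:ℝ) ^ 1 := by
      simpa using hβ
    calc moment b A m * _ ≤ ((M + 1) * ρ ^ m) * ((b:ℝ) ^ 1) :=
          mul_le_mul hmom hβ' (hβ0 m) (by positivity)
    _ = (M + 1) * (b:ℝ) ^ 1 * ρ ^ m := by ring
end
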